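/- arXiv:math/9503212 — 5 statements merged into one kernel-verified Lean document; each statement's English description precedes it below -/
import Mathlib

section
/- For 0 < q ≤ 2 and any ξ, η in L^q([0,1]), one has exp(-‖ξ+η‖^q) + exp(-‖ξ-η‖^q) ≥ 2·exp(-‖ξ‖^q - ‖η‖^q). -/
open MeasureTheory
open scoped ENNReal NNReal

private lemma concave_step {t : ℝ} (ht0 : 0 < t) (ht1 : t ≤ 1) (A B : ℝ≥0∞) :
    A ^ t + B ^ t ≤ 2 ^ ((1:ℝ) - t) * (A + B) ^ t := by
  have h := ENNReal.rpow_add_le_mul_rpow_add_rpow (A ^ t) (B ^ t)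
    (p := 1 / t) (by rw [le_div_iff₀ ht0]; linarith)
  rw [← ENNReal.rpow_mul A, ← ENNReal.rpow_mul B, mul_one_div_cancel ht0.ne',
    ENNReal.rpow_one, ENNReal.rpow_one] at h
  calc A ^ t + B ^ t = ((A ^ t + B ^ t) ^ (1 / t)) ^ t := by
        rw [← ENNReal.rpow_mul, one_div_mul_cancel ht0.ne', ENNReal.rpow_one]
    _ ≤ (2 ^ ((1:ℝ) / t - 1) * (A + B)) ^ t := ENNReal.rpow_le_rpow h ht0.le
    _ = 2 ^ ((1:ℝ) - t) * (A + B) ^ t := by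
        rw [ENNReal.mul_rpow_of_nonneg _ _ ht0.le, ← ENNReal.rpow_mul]
        congr 1
        field_simp

private lemma ennreal_clarkson {q : ℝ} (hq0 : 0 < q) (hq2 : q ≤ 2) {x y u v : ℝ≥0∞}
    (h : x ^ (2:ℝ) + y ^ (2:ℝ) = 2 * (u ^ (2:ℝ) + v ^ (2:ℝ))) :
    x ^ q + y ^ q ≤ 2 * (u ^ q + v ^ q) := by
  have ht0 : 0 < q / 2 := by positivity
  have ht1 : q / 2 ≤ 1 := by linarith
  have hpw : ∀ w : ℝ≥0∞, w ^ q = (w ^ (2:ℝ)) ^ (q / 2) := by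
    intro w
    rw [← ENNReal.rpow_mul]
    congr 1
    ring
  rw [hpw x, hpw y, hpw u, hpw v]
  calc (x ^ (2:ℝ)) ^ (q/2) + (y ^ (2:ℝ)) ^ (q/2)
      ≤ 2 ^ ((1:ℝ) - q/2) * (x ^ (2:ℝ) + y ^ (2:ℝ)) ^ (q/2) := concave_step ht0 ht1 _ _
    _ = 2 ^ ((1:ℝ) - q/2) * (2 ^ (q/2) * (u ^ (2:ℝ) + v ^ (2:ℝ)) ^ (q/2)) := by
        rw [h, ENNReal.mul_rpow_of_nonneg _ _ ht0.le]
    _ ≤ 2 ^ ((1:ℝ) - q/2) * (2 ^ (q/2) * ((u ^ (2:ℝ)) ^ (q/2) + (v ^ (2:ℝ)) ^ (q/2))) := by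
        gcongr
        exact ENNReal.rpow_add_le_add_rpow _ _ ht0.le ht1
    _ = 2 * ((u ^ (2:ℝ)) ^ (q/2) + (v ^ (2:ℝ)) ^ (q/2)) := by
        rw [← mul_assoc, ← ENNReal.rpow_add _ _ (by norm_num) (by norm_num)]
        norm_num

private lemma pointwise_clarkson {q : ℝ} (hq0 : 0 < q) (hq2 : q ≤ 2) (a b : ℝ) :
    (‖a + b‖₊ : ℝ≥0∞) ^ q + (‖a - b‖₊ : ℝ≥0∞) ^ q ≤
      2 * ((‖a‖₊ : ℝ≥0∞) ^ q + (‖b‖₊ : ℝ≥0∞) ^ q) := by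
  apply ennreal_clarkson hq0 hq2
  have h2 : ∀ c : ℝ, ((‖c‖₊ : ℝ≥0∞)) ^ (2:ℝ) = ((‖c‖₊ ^ 2 : ℝ≥0) : ℝ≥0∞) := by
    intro c
    rw [show (2:ℝ) = ((2:ℕ):ℝ) by norm_num, ENNReal.rpow_natCast]
    push_cast
    ring
  rw [h2, h2, h2, h2]
  norm_cast
  apply NNReal.coe_injective
  push_cast
  simp only [coe_nnnorm, Real.norm_eq_abs, sq_abs]
  ring

private lemma clarkson_Lp {α : Type*} [MeasurableSpace α] (μ : Measure α) {q : ℝ}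
    (hq0 : 0 < q) (hq2 : q ≤ 2) (ξ η : Lp ℝ (ENNReal.ofReal q) μ) :
    ‖ξ + η‖ ^ q + ‖ξ - η‖ ^ q ≤ 2 * (‖ξ‖ ^ q + ‖η‖ ^ q) := by
  have hp0 : ENNReal.ofReal q ≠ 0 := by simp [ENNReal.ofReal_eq_zero, hq0, not_le]
  have hptop : ENNReal.ofReal q ≠ ∞ := ENNReal.ofReal_ne_top
  have hpt : (ENNReal.ofReal q).toReal = q := ENNReal.toReal_ofReal hq0.le
  set I : (α → ℝ) → ℝ≥0∞ := fun f => ∫⁻ ω, (‖f ω‖₊ : ℝ≥0∞) ^ q ∂μ with hI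
  have hInorm : ∀ f : Lp ℝ (ENNReal.ofReal q) μ,
      I f = (eLpNorm f (ENNReal.ofReal q) μ) ^ q ∧ ‖f‖ ^ q = (I f).toReal := by
    intro f
    have h1 : eLpNorm f (ENNReal.ofReal q) μ = (I f) ^ (1/q) := by
      rw [eLpNorm_eq_lintegral_rpow_enorm_toReal hp0 hptop, hpt]; rfl
    have h2 : I f = (eLpNorm f (ENNReal.ofReal q) μ) ^ q := by
      rw [h1, ← ENNReal.rpow_mul, one_div_mul_cancel hq0.ne', ENNReal.rpow_one]
    refine ⟨h2, ?_⟩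
    rw [Lp.norm_def, ENNReal.toReal_rpow, ← h2]
  have hIne : ∀ f : Lp ℝ (ENNReal.ofReal q) μ, I f ≠ ∞ := by
    intro f
    rw [(hInorm f).1]
    exact ENNReal.rpow_ne_top_of_nonneg hq0.le (Lp.eLpNorm_ne_top f)
  have hmeas : ∀ f : Lp ℝ (ENNReal.ofReal q) μ,
      AEMeasurable (fun ω => (‖f ω‖₊ : ℝ≥0∞) ^ q) μ := fun f =>
    (Lp.aestronglyMeasurable f).enorm.pow_const q
  have hmadd : AEMeasurable (fun ω => (‖(ξ : α → ℝ) ω + (η : α → ℝ) ω‖₊ : ℝ≥0∞) ^ q) μ :=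
    ((Lp.aestronglyMeasurable ξ).add (Lp.aestronglyMeasurable η)).enorm.pow_const q
  have hclark : I ⇑(ξ + η) + I ⇑(ξ - η) ≤ 2 * (I ⇑ξ + I ⇑η) := by
    have hadd : I ⇑(ξ + η) = ∫⁻ ω, (‖(ξ : α → ℝ) ω + (η : α → ℝ) ω‖₊ : ℝ≥0∞) ^ q ∂μ := by
      refine lintegral_congr_ae ?_
      filter_upwards [AEEqFun.coeFn_add (ξ : α →ₘ[μ] ℝ) (η : α →ₘ[μ] ℝ)] with ω hω
      simp [hω]
    have hsub : I ⇑(ξ - η) = ∫⁻ ω, (‖(ξ : α → ℝ) ω - (η : α → ℝ) ω‖₊ : ℝ≥0∞) ^ q ∂μ := by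
      refine lintegral_congr_ae ?_
      filter_upwards [AEEqFun.coeFn_sub (ξ : α →ₘ[μ] ℝ) (η : α →ₘ[μ] ℝ)] with ω hω
      simp [hω]
    calc I ⇑(ξ + η) + I ⇑(ξ - η)
        = ∫⁻ ω, ((‖(ξ : α → ℝ) ω + (η : α → ℝ) ω‖₊ : ℝ≥0∞) ^ q
            + (‖(ξ : α → ℝ) ω - (η : α → ℝ) ω‖₊ : ℝ≥0∞) ^ q) ∂μ := by
          rw [hadd, hsub, lintegral_add_left' hmadd]
      _ ≤ ∫⁻ ω, 2 * ((‖(ξ : α → ℝ) ω‖₊ : ℝ≥0∞) ^ q + (‖(η : α → ℝ) ω‖₊ : ℝ≥0∞) ^ q) ∂μ :=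
          lintegral_mono fun ω => pointwise_clarkson hq0 hq2 _ _
      _ = 2 * (I ⇑ξ + I ⇑η) := by
          rw [lintegral_const_mul' _ _ (by norm_num), lintegral_add_left' (hmeas ξ)]
  rw [(hInorm (ξ + η)).2, (hInorm (ξ - η)).2, (hInorm ξ).2, (hInorm η).2,
    ← ENNReal.toReal_add (hIne _) (hIne _)]
  have h2 : (2 * (I ⇑ξ + I ⇑η)).toReal = 2 * ((I ⇑ξ).toReal + (I ⇑η).toReal) := by
    rw [ENNReal.toReal_mul, ENNReal.toReal_add (hIne ξ) (hIne η)]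
    norm_num
  rw [← h2]
  exact ENNReal.toReal_mono
    (ENNReal.mul_ne_top (by norm_num) (ENNReal.add_ne_top.2 ⟨hIne ξ, hIne η⟩)) hclark

/-- For `0 < q ≤ 2` and `ξ, η ∈ L^q([0,1])`,
`exp(-‖ξ+η‖^q) + exp(-‖ξ-η‖^q) ≥ 2 exp(-‖ξ‖^q - ‖η‖^q)`. -/
theorem exp_norm_add_sub_ge (q : ℝ) (hq0 : 0 < q) (hq2 : q ≤ 2)
    (ξ η : Lp ℝ (ENNReal.ofReal q) (volume.restrict (Set.Icc (0:ℝ) 1))) :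
    Real.exp (-‖ξ + η‖ ^ q) + Real.exp (-‖ξ - η‖ ^ q) ≥
      2 * Real.exp (-‖ξ‖ ^ q - ‖η‖ ^ q) := by
  have hreal := clarkson_Lp _ hq0 hq2 ξ η
  set A := ‖ξ + η‖ ^ q with hA
  set B := ‖ξ - η‖ ^ q with hB
  have h1 : Real.exp (-‖ξ‖ ^ q - ‖η‖ ^ q) ≤ Real.exp (-((A + B) / 2)) :=
    Real.exp_le_exp.2 (by linarith)
  have hu : Real.exp (-(A/2)) ^ 2 = Real.exp (-A) := by
    rw [sq, ← Real.exp_add]; ring_nf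
  have hv : Real.exp (-(B/2)) ^ 2 = Real.exp (-B) := by
    rw [sq, ← Real.exp_add]; ring_nf
  have huv : Real.exp (-(A/2)) * Real.exp (-(B/2)) = Real.exp (-((A + B) / 2)) := by
    rw [← Real.exp_add]; ring_nf
  nlinarith [sq_nonneg (Real.exp (-(A/2)) - Real.exp (-(B/2))),
    Real.exp_pos (-‖ξ‖ ^ q - ‖η‖ ^ q), Real.exp_pos (-((A+B)/2))]
end

section
/- Let γ be a symmetric Gaussian measure on ℝ^n, and let f: ℝ^m → ℝ and g: ℝ^{k-m} → ℝ be even continuous positive definite functions (i.e., Fourier transforms of finite symmetric measures μ on ℝ^m and ν on ℝ^{k-m}). Let ξ_1,…,ξ_k ∈ ℝ^n and set X_i(x) = ⟨x,ξ_i⟩. Then ∫ f(X_1,…,X_m)·g(X_{m+1},…,X_k) dγ ≥ (∫ f(X_1,…,X_m) dγ)·(∫ g(X_{m+1},…,X_k) dγ). -/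
open MeasureTheory Real Filter Set ProbabilityTheory
open scoped NNReal

lemma tendsto_mul_exp_neg_mul_sq_atTop {b : ℝ} (hb : 0 < b) :
    Tendsto (fun x : ℝ => x * Real.exp (-b * x ^ 2)) atTop (nhds 0) := by
  have h2 : Tendsto (fun x : ℝ => Real.exp (-(1/2) * x)) atTop (nhds 0) :=
    Real.tendsto_exp_atBot.comp (tendsto_id.const_mul_atTop_of_neg (by norm_num))
  have h := (rpow_mul_exp_neg_mul_sq_isLittleO_exp_neg hb 1).trans_tendsto h2
  simpa [Real.rpow_one] using h

lemma tendsto_mul_exp_neg_mul_sq_atBot {b : ℝ} (hb : 0 < b) :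
    Tendsto (fun x : ℝ => x * Real.exp (-b * x ^ 2)) atBot (nhds 0) := by
  have h := (tendsto_mul_exp_neg_mul_sq_atTop hb).comp tendsto_neg_atBot_atTop
  have h' : Tendsto (fun x : ℝ => -(x * Real.exp (-b * x ^ 2))) atBot (nhds 0) := by
    have : ∀ x : ℝ, -(x * Real.exp (-b * x ^ 2)) = ((fun x => x * Real.exp (-b * x ^ 2)) ∘ Neg.neg) x := by
      intro x; simp only [Function.comp_apply]; ring_nf
    rw [funext this]; exact h
  simpa using h'.neg

lemma integrable_sq_mul_exp_neg_mul_sq {b : ℝ} (hb : 0 < b) :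
    Integrable (fun x : ℝ => x ^ 2 * Real.exp (-b * x ^ 2)) := by
  have h := integrable_rpow_mul_exp_neg_mul_sq hb (by norm_num : (-1:ℝ) < 2)
  have : ∀ x : ℝ, x ^ (2:ℝ) = x ^ (2:ℕ) := fun x => by
    rw [← Real.rpow_natCast x 2]; norm_num
  simpa [this] using h

lemma hasDerivAt_aux {b : ℝ} (hb : 0 < b) (x : ℝ) :
    HasDerivAt (fun y : ℝ => -(2*b)⁻¹ * (y * Real.exp (-b * y ^ 2)))
      (x ^ 2 * Real.exp (-b * x ^ 2) - (2*b)⁻¹ * Real.exp (-b * x ^ 2)) x := by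
  have h1 : HasDerivAt (fun y : ℝ => -b * y ^ 2) (-b * (2 * x)) x := by
    simpa using ((hasDerivAt_pow 2 x).const_mul (-b))
  have h2 : HasDerivAt (fun y : ℝ => Real.exp (-b * y ^ 2))
      (Real.exp (-b * x ^ 2) * (-b * (2 * x))) x := h1.exp
  have h3 : HasDerivAt (fun y : ℝ => y * Real.exp (-b * y ^ 2))
      (1 * Real.exp (-b * x ^ 2) + x * (Real.exp (-b * x ^ 2) * (-b * (2 * x)))) x :=
    (hasDerivAt_id x).mul h2
  have h4 := h3.const_mul (-(2*b)⁻¹)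
  refine h4.congr_deriv ?_
  have hb' : b ≠ 0 := hb.ne'
  field_simp
  ring

lemma integral_sq_mul_exp_neg_mul_sq {b : ℝ} (hb : 0 < b) :
    ∫ x : ℝ, x ^ 2 * Real.exp (-b * x ^ 2) = (2 * b)⁻¹ * Real.sqrt (π / b) := by
  set f : ℝ → ℝ := fun y => -(2*b)⁻¹ * (y * Real.exp (-b * y ^ 2)) with hf
  set F : ℝ → ℝ := fun x => x ^ 2 * Real.exp (-b * x ^ 2) - (2*b)⁻¹ * Real.exp (-b * x ^ 2)
    with hF
  have hInt2 := integrable_sq_mul_exp_neg_mul_sq hb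
  have hIntE := integrable_exp_neg_mul_sq hb
  have hIntF : Integrable F := hInt2.sub (hIntE.const_mul _)
  have hT : Tendsto f atTop (nhds 0) := by
    have := (tendsto_mul_exp_neg_mul_sq_atTop hb).const_mul (-(2*b)⁻¹)
    rw [mul_zero] at this; exact this
  have hB : Tendsto f atBot (nhds 0) := by
    have := (tendsto_mul_exp_neg_mul_sq_atBot hb).const_mul (-(2*b)⁻¹)
    rw [mul_zero] at this; exact this
  have hIoi : ∫ x in Ioi (0:ℝ), F x = 0 := by
    have := integral_Ioi_of_hasDerivAt_of_tendsto' (a := 0) (f := f) (f' := F)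
      (fun x _ => hasDerivAt_aux hb x) hIntF.integrableOn hT
    simpa [hf] using this
  have hIic : ∫ x in Iic (0:ℝ), F x = 0 := by
    have := integral_Iic_of_hasDerivAt_of_tendsto' (a := 0) (f := f) (f' := F)
      (fun x _ => hasDerivAt_aux hb x) hIntF.integrableOn hB
    simpa [hf] using this
  have hR : ∫ x : ℝ, F x = 0 := by
    rw [← intervalIntegral.integral_Iic_add_Ioi hIntF.integrableOn hIntF.integrableOn] at *
    rw [hIic, hIoi]; ring
  rw [hF] at hR
  rw [integral_sub hInt2 (hIntE.const_mul _)] at hR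
  rw [integral_const_mul, integral_gaussian] at hR
  linarith [hR]

lemma integral_gaussianReal_eq {v : ℝ≥0} (hv : v ≠ 0) {E : Type*} [NormedAddCommGroup E]
    [NormedSpace ℝ E] (g : ℝ → E) :
    ∫ y, g y ∂(gaussianReal 0 v) = ∫ y, gaussianPDFReal 0 v y • g y := by
  rw [gaussianReal_of_var_ne_zero 0 hv]
  have h0 : (fun x => ENNReal.ofReal (gaussianPDFReal 0 v x))
      = fun x => (((gaussianPDFReal 0 v x).toNNReal : ℝ≥0) : ENNReal) := rfl
  rw [gaussianPDF_def, h0,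
    integral_withDensity_eq_integral_smul (measurable_gaussianPDFReal 0 v).real_toNNReal]
  congr 1; ext y
  rw [NNReal.smul_def, Real.coe_toNNReal _ (gaussianPDFReal_nonneg 0 v y)]

lemma integrable_gaussianReal_iff {v : ℝ≥0} (hv : v ≠ 0) {E : Type*} [NormedAddCommGroup E]
    [NormedSpace ℝ E] (g : ℝ → E) :
    Integrable g (gaussianReal 0 v) ↔ Integrable (fun y => gaussianPDFReal 0 v y • g y) := by
  rw [gaussianReal_of_var_ne_zero 0 hv]
  have h0 : (fun x => ENNReal.ofReal (gaussianPDFReal 0 v x))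
      = fun x => (((gaussianPDFReal 0 v x).toNNReal : ℝ≥0) : ENNReal) := rfl
  rw [gaussianPDF_def, h0,
    integrable_withDensity_iff_integrable_smul (measurable_gaussianPDFReal 0 v).real_toNNReal]
  constructor <;> intro h <;> refine h.congr (Eventually.of_forall fun y => ?_) <;>
    simp only [NNReal.smul_def, Real.coe_toNNReal _ (gaussianPDFReal_nonneg 0 v y)]
lemma integral_sq_gaussianReal (v : ℝ≥0) : ∫ y, y^2 ∂(gaussianReal 0 v) = v := by
  rcases eq_or_ne v 0 with rfl | hv
  · simp [gaussianReal_zero_var]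
  · have hvpos : (0:ℝ) < v := lt_of_le_of_ne (v.coe_nonneg) (by exact_mod_cast (Ne.symm hv))
    have hbpos : (0:ℝ) < (2*(v:ℝ))⁻¹ := by positivity
    rw [integral_gaussianReal_eq hv]
    have hrw : ∀ y : ℝ, gaussianPDFReal 0 v y • (y^2) =
        (Real.sqrt (2*π*(v:ℝ)))⁻¹ * (y^2 * Real.exp (-(2*(v:ℝ))⁻¹ * y^2)) := by
      intro y
      rw [gaussianPDFReal, smul_eq_mul]
      have : -(y - 0)^2/(2*(v:ℝ)) = -(2*(v:ℝ))⁻¹ * y^2 := by ring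
      rw [this]; ring
    simp_rw [hrw]
    rw [integral_const_mul, integral_sq_mul_exp_neg_mul_sq hbpos]
    have h1 : (2*(2*(v:ℝ))⁻¹)⁻¹ = (v:ℝ) := by field_simp
    have h2 : π/(2*(v:ℝ))⁻¹ = 2*π*(v:ℝ) := by field_simp
    rw [h1, h2]
    have h3 : (0:ℝ) < Real.sqrt (2*π*(v:ℝ)) := Real.sqrt_pos.mpr (by positivity)
    field_simp

lemma integrable_sq_gaussianReal (v : ℝ≥0) :
    Integrable (fun y : ℝ => y^2) (gaussianReal 0 v) := by
  rcases eq_or_ne v 0 with rfl | hv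
  · rw [gaussianReal_zero_var]
    refine ⟨(continuous_pow 2).aestronglyMeasurable, ?_⟩
    rw [HasFiniteIntegral, lintegral_dirac]
    exact ENNReal.coe_lt_top
  · have hvpos : (0:ℝ) < v := lt_of_le_of_ne (v.coe_nonneg) (by exact_mod_cast (Ne.symm hv))
    have hbpos : (0:ℝ) < (2*(v:ℝ))⁻¹ := by positivity
    rw [integrable_gaussianReal_iff hv]
    have hrw : ∀ y : ℝ, gaussianPDFReal 0 v y • (y^2) =
        (Real.sqrt (2*π*(v:ℝ)))⁻¹ * (y^2 * Real.exp (-(2*(v:ℝ))⁻¹ * y^2)) := by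
      intro y
      rw [gaussianPDFReal, smul_eq_mul]
      have : -(y - 0)^2/(2*(v:ℝ)) = -(2*(v:ℝ))⁻¹ * y^2 := by ring
      rw [this]; ring
    exact (((integrable_sq_mul_exp_neg_mul_sq hbpos).const_mul _).congr
      (Eventually.of_forall fun y => (hrw y).symm))

lemma integral_cexp_gaussianReal (v : ℝ≥0) :
    ∫ y : ℝ, Complex.exp (-(y:ℂ) * Complex.I) ∂(gaussianReal 0 v) =
      ((Real.exp (-(v:ℝ)/2) : ℝ) : ℂ) := by
  rcases eq_or_ne v 0 with rfl | hv
  · rw [gaussianReal_zero_var, integral_dirac]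
    simp
  · have hvpos : (0:ℝ) < v := lt_of_le_of_ne (v.coe_nonneg) (by exact_mod_cast (Ne.symm hv))
    set b : ℝ := (2*(v:ℝ))⁻¹ with hbdef
    have hbpos : (0:ℝ) < b := by positivity
    rw [integral_gaussianReal_eq hv]
    have hrw : ∀ y : ℝ, gaussianPDFReal 0 v y • Complex.exp (-(y:ℂ) * Complex.I) =
        (((Real.sqrt (2*π*(v:ℝ)))⁻¹ : ℝ) : ℂ) *
          Complex.exp ((-(b:ℝ) : ℂ) * (y:ℂ)^2 + (-Complex.I) * (y:ℂ) + 0) := by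
      intro y
      rw [gaussianPDFReal]
      simp only [Complex.real_smul, Complex.ofReal_mul, Complex.ofReal_exp]
      rw [mul_assoc, ← Complex.exp_add]
      congr 1
      have : -(y - 0)^2/(2*(v:ℝ)) = -b * y^2 := by rw [hbdef]; ring
      rw [this]
      push_cast
      ring
    simp_rw [hrw]
    rw [integral_const_mul, integral_cexp_quadratic (by simpa using hbpos : (-(b:ℝ) : ℂ).re < 0)]
    have h2 : (↑π / -(-(b:ℝ) : ℂ)) = ((2*π*(v:ℝ) : ℝ) : ℂ) := by
      rw [hbdef]; push_cast
      have : ((v:ℂ)) ≠ 0 := by exact_mod_cast (by exact_mod_cast hv : ((v:ℝ)) ≠ 0)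
      field_simp
    have h3 : ((0:ℂ) - (-Complex.I)^2/(4 * (-(b:ℝ) : ℂ))) = ((-(v:ℝ)/2 : ℝ) : ℂ) := by
      rw [hbdef]; push_cast
      have hI : (-Complex.I)^2 = -1 := by simp [Complex.I_sq]
      rw [hI]
      have : ((v:ℂ)) ≠ 0 := by exact_mod_cast (by exact_mod_cast hv : ((v:ℝ)) ≠ 0)
      field_simp
      ring
    rw [h2, h3]
    have h4 : (((2*π*(v:ℝ) : ℝ) : ℂ)) ^ (1/2 : ℂ) = ((Real.sqrt (2*π*(v:ℝ)) : ℝ) : ℂ) := by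
      rw [Real.sqrt_eq_rpow, Complex.ofReal_cpow (by positivity)]
      norm_num
    rw [h4, ← Complex.ofReal_exp]
    rw [← Complex.ofReal_mul, ← Complex.ofReal_mul]
    congr 1
    have h3 : (0:ℝ) < Real.sqrt (2*π*(v:ℝ)) := Real.sqrt_pos.mpr (by positivity)
    field_simp

open scoped RealInnerProductSpace

section Core

variable {n : ℕ} (γ : Measure (EuclideanSpace ℝ (Fin n))) [IsProbabilityMeasure γ]

lemma inner_cont (η : EuclideanSpace ℝ (Fin n)) :
    Continuous (fun x : EuclideanSpace ℝ (Fin n) => (⟪x, η⟫ : ℝ)) :=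
  continuous_id.inner continuous_const

lemma cexp_ofReal_cont {α : Type*} [TopologicalSpace α] {h : α → ℝ} (hh : Continuous h) :
    Continuous fun x => Complex.exp (-(h x : ℂ) * Complex.I) := by fun_prop

lemma cexp_inner_cont (η : EuclideanSpace ℝ (Fin n)) :
    Continuous (fun x : EuclideanSpace ℝ (Fin n) =>
      Complex.exp ((-(⟪x, η⟫ : ℝ) : ℂ) * Complex.I)) :=
  cexp_ofReal_cont (inner_cont η)

lemma norm_cexp_inner (x η : EuclideanSpace ℝ (Fin n)) :
    ‖Complex.exp ((-(⟪x, η⟫ : ℝ) : ℂ) * Complex.I)‖ = 1 := by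
  rw [Complex.norm_exp]
  simp

/-- The second moment of the linear functional `⟪·, η⟫` under `γ`. -/
noncomputable def Vf (η : EuclideanSpace ℝ (Fin n)) : ℝ := ∫ x, (⟪x, η⟫ : ℝ)^2 ∂γ

/-- The "characteristic function" value. -/
noncomputable def ρf (η : EuclideanSpace ℝ (Fin n)) : ℝ := Real.exp (-(Vf γ η)/2)

variable (hγ : ∀ L : EuclideanSpace ℝ (Fin n) →L[ℝ] ℝ,
  ∃ v : NNReal, γ.map L = ProbabilityTheory.gaussianReal 0 v)

include hγ

lemma map_inner_gaussian (η : EuclideanSpace ℝ (Fin n)) :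
    ∃ v : NNReal, γ.map (fun x => (⟪x, η⟫ : ℝ)) = gaussianReal 0 v := by
  obtain ⟨v, hv⟩ := hγ (innerSL ℝ η)
  refine ⟨v, ?_⟩
  rw [← hv]
  congr 1
  funext x
  exact real_inner_comm η x

lemma Vf_int (η : EuclideanSpace ℝ (Fin n)) :
    Integrable (fun x => (⟪x, η⟫ : ℝ)^2) γ := by
  obtain ⟨v, hv⟩ := map_inner_gaussian γ hγ η
  have hmeas : AEMeasurable (fun x => (⟪x, η⟫ : ℝ)) γ := (inner_cont η).aemeasurable
  have := (integrable_map_measure (μ := γ) (f := fun x => (⟪x, η⟫ : ℝ))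
    (g := fun y : ℝ => y^2) ((continuous_pow 2).aestronglyMeasurable) hmeas)
  rw [hv] at this
  exact this.mp (integrable_sq_gaussianReal v)

lemma Vf_eq (η : EuclideanSpace ℝ (Fin n)) :
    ∀ v : NNReal, γ.map (fun x => (⟪x, η⟫ : ℝ)) = gaussianReal 0 v → Vf γ η = v := by
  intro v hv
  have hmeas : AEMeasurable (fun x => (⟪x, η⟫ : ℝ)) γ := (inner_cont η).aemeasurable
  rw [Vf, ← integral_map hmeas ((continuous_pow 2).aestronglyMeasurable), hv,
    integral_sq_gaussianReal]

lemma char_eq (η : EuclideanSpace ℝ (Fin n)) :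
    ∫ x, Complex.exp ((-(⟪x, η⟫ : ℝ) : ℂ) * Complex.I) ∂γ = ((ρf γ η : ℝ) : ℂ) := by
  obtain ⟨v, hv⟩ := map_inner_gaussian γ hγ η
  have hmeas : AEMeasurable (fun x => (⟪x, η⟫ : ℝ)) γ := (inner_cont η).aemeasurable
  have hsm : AEStronglyMeasurable (fun y : ℝ => Complex.exp (-(y : ℂ) * Complex.I))
      (γ.map (fun x => (⟪x, η⟫ : ℝ))) := by
    refine Continuous.aestronglyMeasurable ?_
    fun_prop
  have h1 : ∫ x, Complex.exp ((-(⟪x, η⟫ : ℝ) : ℂ) * Complex.I) ∂γ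
      = ∫ y : ℝ, Complex.exp (-(y : ℂ) * Complex.I) ∂(γ.map (fun x => (⟪x, η⟫ : ℝ))) :=
    (integral_map hmeas hsm).symm
  rw [h1, hv, integral_cexp_gaussianReal, ρf, Vf_eq γ hγ η v hv]

omit hγ in
lemma Vf_nonneg (η : EuclideanSpace ℝ (Fin n)) : 0 ≤ Vf γ η :=
  integral_nonneg fun x => sq_nonneg _

omit hγ in
lemma ρf_nonneg (η : EuclideanSpace ℝ (Fin n)) : 0 ≤ ρf γ η := (Real.exp_pos _).le

omit hγ in
lemma ρf_le_one (η : EuclideanSpace ℝ (Fin n)) : ρf γ η ≤ 1 := by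
  rw [ρf, Real.exp_le_one_iff]
  have := Vf_nonneg γ η
  linarith

lemma Vf_parallelogram (a b : EuclideanSpace ℝ (Fin n)) :
    Vf γ (a + b) + Vf γ (a - b) = 2 * Vf γ a + 2 * Vf γ b := by
  have e1 : (fun x : EuclideanSpace ℝ (Fin n) => (⟪x, a + b⟫ : ℝ)^2)
      = fun x => ((⟪x, a⟫ : ℝ) + (⟪x, b⟫ : ℝ))^2 := by
    funext x; rw [inner_add_right]
  have e2 : (fun x : EuclideanSpace ℝ (Fin n) => (⟪x, a - b⟫ : ℝ)^2)
      = fun x => ((⟪x, a⟫ : ℝ) - (⟪x, b⟫ : ℝ))^2 := by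
    funext x; rw [inner_sub_right]
  have i1 := Vf_int γ hγ (a + b); have i2 := Vf_int γ hγ (a - b)
  have ia := Vf_int γ hγ a; have ib := Vf_int γ hγ b
  rw [e1] at i1; rw [e2] at i2
  have key : Vf γ (a + b) + Vf γ (a - b)
      = ∫ x, (((⟪x, a⟫ : ℝ) + (⟪x, b⟫ : ℝ))^2 + ((⟪x, a⟫ : ℝ) - (⟪x, b⟫ : ℝ))^2) ∂γ := by
    rw [Vf, Vf, e1, e2, integral_add i1 i2]
  rw [key]
  have key2 : ∫ x, (((⟪x, a⟫ : ℝ) + (⟪x, b⟫ : ℝ))^2 + ((⟪x, a⟫ : ℝ) - (⟪x, b⟫ : ℝ))^2) ∂γ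
      = ∫ x, (2 * (⟪x, a⟫ : ℝ)^2 + 2 * (⟪x, b⟫ : ℝ)^2) ∂γ := by
    congr 1; funext x; ring
  rw [key2, integral_add (ia.const_mul 2) (ib.const_mul 2), integral_const_mul,
    integral_const_mul, Vf, Vf]

lemma ρf_key (a b : EuclideanSpace ℝ (Fin n)) :
    2 * (ρf γ a * ρf γ b) ≤ ρf γ (a + b) + ρf γ (a - b) := by
  have hpar := Vf_parallelogram γ hγ a b
  rw [ρf, ρf, ρf, ρf]
  have h1 : Real.exp (-(Vf γ a)/2) * Real.exp (-(Vf γ b)/2)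
      = Real.exp (-(Vf γ (a+b))/4) * Real.exp (-(Vf γ (a-b))/4) := by
    rw [← Real.exp_add, ← Real.exp_add]
    congr 1
    linarith
  rw [h1]
  have e1 : Real.exp (-(Vf γ (a+b))/2) = Real.exp (-(Vf γ (a+b))/4) ^ 2 := by
    rw [sq, ← Real.exp_add]; congr 1; ring
  have e2 : Real.exp (-(Vf γ (a-b))/2) = Real.exp (-(Vf γ (a-b))/4) ^ 2 := by
    rw [sq, ← Real.exp_add]; congr 1; ring
  rw [e1, e2]
  nlinarith [sq_nonneg (Real.exp (-(Vf γ (a+b))/4) - Real.exp (-(Vf γ (a-b))/4))]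

lemma ρf_cont : Continuous (ρf γ) := by
  have hcont : Continuous (fun η : EuclideanSpace ℝ (Fin n) =>
      ∫ x, Complex.exp ((-(⟪x, η⟫ : ℝ) : ℂ) * Complex.I) ∂γ) := by
    apply continuous_of_dominated (bound := fun _ => (1:ℝ))
    · exact fun η => (cexp_inner_cont η).aestronglyMeasurable
    · exact fun η => Eventually.of_forall fun x => le_of_eq (norm_cexp_inner x η)
    · exact integrable_const 1
    · refine Eventually.of_forall fun x => ?_
      exact cexp_ofReal_cont (continuous_const.inner continuous_id)
  have : Continuous (fun η => ((∫ x, Complex.exp ((-(⟪x, η⟫ : ℝ) : ℂ) * Complex.I) ∂γ).re)) :=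
    Complex.continuous_re.comp hcont
  refine this.congr fun η => ?_
  rw [char_eq γ hγ η, Complex.ofReal_re]



lemma engine {T : Type*} [MeasurableSpace T] [TopologicalSpace T] [BorelSpace T]
    [SecondCountableTopology T] (κ : Measure T) [IsFiniteMeasure κ]
    (c : T → EuclideanSpace ℝ (Fin n)) (hc : Continuous c) :
    ∫ x, (∫ t, Complex.exp ((-(⟪x, c t⟫ : ℝ) : ℂ) * Complex.I) ∂κ) ∂γ
      = ((∫ t, ρf γ (c t) ∂κ : ℝ) : ℂ) := by
  have hib : Integrable (Function.uncurry fun (x : EuclideanSpace ℝ (Fin n)) (t : T) =>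
      Complex.exp ((-(⟪x, c t⟫ : ℝ) : ℂ) * Complex.I)) (γ.prod κ) := by
    constructor
    · exact (cexp_ofReal_cont (continuous_fst.inner (hc.comp continuous_snd))).aestronglyMeasurable
    · refine HasFiniteIntegral.of_bounded (C := 1) ?_
      exact Eventually.of_forall fun z => le_of_eq (norm_cexp_inner _ _)
  rw [integral_integral_swap hib]
  have hpt : ∀ t, ∫ x, Complex.exp ((-(⟪x, c t⟫ : ℝ) : ℂ) * Complex.I) ∂γ
      = ((ρf γ (c t) : ℝ) : ℂ) := fun t => char_eq γ hγ (c t)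
  simp_rw [hpt]
  exact integral_ofReal

omit hγ in
lemma integrable_bdd_cont {T : Type*} [MeasurableSpace T] [TopologicalSpace T] [BorelSpace T]
    [SecondCountableTopology T] (κ : Measure T) [IsFiniteMeasure κ]
    {F : T → ℝ} (hF : Continuous F) (C : ℝ) (hC : ∀ z, ‖F z‖ ≤ C) : Integrable F κ :=
  ⟨hF.aestronglyMeasurable, HasFiniteIntegral.of_bounded (Eventually.of_forall hC)⟩

lemma core_ineq {p q : ℕ} (f : (Fin p → ℝ) → ℝ) (g : (Fin q → ℝ) → ℝ)
    (μ : Measure (Fin p → ℝ)) [IsFiniteMeasure μ] (ν : Measure (Fin q → ℝ)) [IsFiniteMeasure ν]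
    (hνsym : ν.map (fun t => -t) = ν)
    (hμF : ∀ u, (f u : ℂ) = ∫ t, Complex.exp (-(∑ i, u i * t i : ℝ) * Complex.I) ∂μ)
    (hνF : ∀ u, (g u : ℂ) = ∫ t, Complex.exp (-(∑ i, u i * t i : ℝ) * Complex.I) ∂ν)
    (ζ : Fin p → EuclideanSpace ℝ (Fin n)) (ηv : Fin q → EuclideanSpace ℝ (Fin n)) :
    ∫ x, f (fun i => ⟪x, ζ i⟫) * g (fun j => ⟪x, ηv j⟫) ∂γ ≥
      (∫ x, f (fun i => ⟪x, ζ i⟫) ∂γ) * (∫ x, g (fun j => ⟪x, ηv j⟫) ∂γ) := by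
  classical
  set av : (Fin p → ℝ) → EuclideanSpace ℝ (Fin n) := fun t => ∑ i, t i • ζ i with hav_def
  set bv : (Fin q → ℝ) → EuclideanSpace ℝ (Fin n) := fun s => ∑ j, s j • ηv j with hbv_def
  have hav : Continuous av :=
    continuous_finset_sum _ fun i _ => (continuous_apply i).smul continuous_const
  have hbv : Continuous bv :=
    continuous_finset_sum _ fun j _ => (continuous_apply j).smul continuous_const
  have hinner_a : ∀ (x : EuclideanSpace ℝ (Fin n)) t, (∑ i, (⟪x, ζ i⟫ : ℝ) * t i) = ⟪x, av t⟫ := by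
    intro x t
    rw [hav_def]
    simp only [inner_sum, real_inner_smul_right]
    exact Finset.sum_congr rfl fun i _ => mul_comm _ _
  have hinner_b : ∀ (x : EuclideanSpace ℝ (Fin n)) s, (∑ j, (⟪x, ηv j⟫ : ℝ) * s j) = ⟪x, bv s⟫ := by
    intro x s
    rw [hbv_def]
    simp only [inner_sum, real_inner_smul_right]
    exact Finset.sum_congr rfl fun j _ => mul_comm _ _
  have hbv_neg : ∀ s, bv (-s) = -(bv s) := by
    intro s
    rw [hbv_def]
    simp [neg_smul, Finset.sum_neg_distrib]
  -- Identity 1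
  have hI1 : ∫ x, f (fun i => ⟪x, ζ i⟫) ∂γ = ∫ t, ρf γ (av t) ∂μ := by
    apply Complex.ofReal_injective
    calc ((∫ x, f (fun i => (⟪x, ζ i⟫ : ℝ)) ∂γ : ℝ) : ℂ)
        = ∫ x, ((f (fun i => (⟪x, ζ i⟫ : ℝ)) : ℝ) : ℂ) ∂γ := integral_ofReal.symm
      _ = ∫ x, (∫ t, Complex.exp ((-(⟪x, av t⟫ : ℝ) : ℂ) * Complex.I) ∂μ) ∂γ := by
          congr 1; funext x
          rw [hμF]
          congr 1; funext t
          rw [hinner_a x t]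
      _ = ((∫ t, ρf γ (av t) ∂μ : ℝ) : ℂ) := engine γ hγ μ av hav
  have hI2 : ∫ x, g (fun j => ⟪x, ηv j⟫) ∂γ = ∫ s, ρf γ (bv s) ∂ν := by
    apply Complex.ofReal_injective
    calc ((∫ x, g (fun j => (⟪x, ηv j⟫ : ℝ)) ∂γ : ℝ) : ℂ)
        = ∫ x, ((g (fun j => (⟪x, ηv j⟫ : ℝ)) : ℝ) : ℂ) ∂γ := integral_ofReal.symm
      _ = ∫ x, (∫ s, Complex.exp ((-(⟪x, bv s⟫ : ℝ) : ℂ) * Complex.I) ∂ν) ∂γ := by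
          congr 1; funext x
          rw [hνF]
          congr 1; funext s
          rw [hinner_b x s]
      _ = ((∫ s, ρf γ (bv s) ∂ν : ℝ) : ℂ) := engine γ hγ ν bv hbv
  -- Identity 3
  have hcplus : Continuous fun z : (Fin p → ℝ) × (Fin q → ℝ) => av z.1 + bv z.2 :=
    (hav.comp continuous_fst).add (hbv.comp continuous_snd)
  have hcminus : Continuous fun z : (Fin p → ℝ) × (Fin q → ℝ) => av z.1 - bv z.2 :=
    (hav.comp continuous_fst).sub (hbv.comp continuous_snd)
  have hI3 : ∫ x, f (fun i => ⟪x, ζ i⟫) * g (fun j => ⟪x, ηv j⟫) ∂γ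
      = ∫ z, ρf γ (av z.1 + bv z.2) ∂(μ.prod ν) := by
    apply Complex.ofReal_injective
    calc ((∫ x, f (fun i => (⟪x, ζ i⟫ : ℝ)) * g (fun j => (⟪x, ηv j⟫ : ℝ)) ∂γ : ℝ) : ℂ)
        = ∫ x, ((f (fun i => (⟪x, ζ i⟫ : ℝ)) * g (fun j => (⟪x, ηv j⟫ : ℝ)) : ℝ) : ℂ) ∂γ :=
          integral_ofReal.symm
      _ = ∫ x, (∫ z, Complex.exp ((-(⟪x, av z.1 + bv z.2⟫ : ℝ) : ℂ) * Complex.I)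
            ∂(μ.prod ν)) ∂γ := by
          congr 1; funext x
          rw [Complex.ofReal_mul, hμF, hνF]
          rw [← integral_prod_mul]
          congr 1; funext z
          rw [← Complex.exp_add]
          congr 1
          rw [hinner_a x z.1, hinner_b x z.2, inner_add_right]
          push_cast
          ring
      _ = ((∫ z, ρf γ (av z.1 + bv z.2) ∂(μ.prod ν) : ℝ) : ℂ) :=
          engine γ hγ (μ.prod ν) _ hcplus
  -- symmetry
  have hIntPlus : Integrable (fun z : (Fin p → ℝ) × (Fin q → ℝ) => ρf γ (av z.1 + bv z.2))
      (μ.prod ν) := by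
    refine integrable_bdd_cont _ ((ρf_cont γ hγ).comp hcplus) 1 fun z => ?_
    rw [Real.norm_eq_abs, abs_of_nonneg (ρf_nonneg γ _)]
    exact ρf_le_one γ _
  have hIntMinus : Integrable (fun z : (Fin p → ℝ) × (Fin q → ℝ) => ρf γ (av z.1 - bv z.2))
      (μ.prod ν) := by
    refine integrable_bdd_cont _ ((ρf_cont γ hγ).comp hcminus) 1 fun z => ?_
    rw [Real.norm_eq_abs, abs_of_nonneg (ρf_nonneg γ _)]
    exact ρf_le_one γ _
  have hIntProd : Integrable (fun z : (Fin p → ℝ) × (Fin q → ℝ) => ρf γ (av z.1) * ρf γ (bv z.2))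
      (μ.prod ν) := by
    refine integrable_bdd_cont _ (((ρf_cont γ hγ).comp (hav.comp continuous_fst)).mul
      ((ρf_cont γ hγ).comp (hbv.comp continuous_snd))) 1 fun z => ?_
    rw [Real.norm_eq_abs, abs_of_nonneg (mul_nonneg (ρf_nonneg γ _) (ρf_nonneg γ _))]
    exact mul_le_one₀ (ρf_le_one γ _) (ρf_nonneg γ _) (ρf_le_one γ _)
  have hsymm : ∫ z, ρf γ (av z.1 + bv z.2) ∂(μ.prod ν)
      = ∫ z, ρf γ (av z.1 - bv z.2) ∂(μ.prod ν) := by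
    rw [integral_prod _ hIntPlus, integral_prod _ hIntMinus]
    congr 1; funext t
    have hsm : AEStronglyMeasurable (fun s => ρf γ (av t + bv s)) (ν.map (fun s => -s)) := by
      apply Continuous.aestronglyMeasurable
      exact (ρf_cont γ hγ).comp (continuous_const.add hbv)
    have h0 : ∫ s, ρf γ (av t + bv s) ∂ν
        = ∫ s, ρf γ (av t + bv s) ∂(ν.map (fun s => -s)) := by rw [hνsym]
    rw [h0, integral_map measurable_neg.aemeasurable hsm]
    simp only [hbv_neg, ← sub_eq_add_neg]
  -- product of integrals
  have hprod : (∫ t, ρf γ (av t) ∂μ) * (∫ s, ρf γ (bv s) ∂ν)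
      = ∫ z, ρf γ (av z.1) * ρf γ (bv z.2) ∂(μ.prod ν) := (integral_prod_mul _ _).symm
  have hmono : ∫ z, 2 * (ρf γ (av z.1) * ρf γ (bv z.2)) ∂(μ.prod ν)
      ≤ ∫ z, (ρf γ (av z.1 + bv z.2) + ρf γ (av z.1 - bv z.2)) ∂(μ.prod ν) :=
    integral_mono (hIntProd.const_mul 2) (hIntPlus.add hIntMinus)
      (fun z => ρf_key γ hγ (av z.1) (bv z.2))
  rw [integral_const_mul, integral_add hIntPlus hIntMinus] at hmono
  rw [ge_iff_le, hI1, hI2, hI3, hprod]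
  linarith [hmono, hsymm]

end Core

/-- Correlation-type inequality for even continuous positive definite functions of
jointly Gaussian variables (the `q = 2` case of Theorem 1). -/
theorem gaussian_posdef_correlation
    (n k m : ℕ) (hm : m ≤ k)
    (γ : Measure (EuclideanSpace ℝ (Fin n))) [IsProbabilityMeasure γ]
    -- γ is a symmetric (centered) Gaussian measure: every linear image is a
    -- centered Gaussian on ℝ
    (hγ : ∀ L : EuclideanSpace ℝ (Fin n) →L[ℝ] ℝ,
      ∃ v : NNReal, γ.map L = ProbabilityTheory.gaussianReal 0 v)
    (f : (Fin m → ℝ) → ℝ) (g : (Fin (k - m) → ℝ) → ℝ)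
    (hfc : Continuous f) (hgc : Continuous g)
    (hfe : ∀ u, f (-u) = f u) (hge : ∀ u, g (-u) = g u)
    -- f and g are positive definite: Fourier transforms of finite symmetric measures
    (hf : ∃ μ : Measure (Fin m → ℝ), IsFiniteMeasure μ ∧ μ.map (fun t => -t) = μ ∧
      ∀ u, (f u : ℂ) = ∫ t, Complex.exp (-(∑ i, u i * t i : ℝ) * Complex.I) ∂μ)
    (hg : ∃ ν : Measure (Fin (k - m) → ℝ), IsFiniteMeasure ν ∧ ν.map (fun t => -t) = ν ∧
      ∀ u, (g u : ℂ) = ∫ t, Complex.exp (-(∑ i, u i * t i : ℝ) * Complex.I) ∂ν)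
    (ξ : Fin k → EuclideanSpace ℝ (Fin n)) :
    ∫ x, f (fun i => ⟪x, ξ (Fin.castLE hm i)⟫) *
        g (fun j => ⟪x, ξ (Fin.cast (Nat.add_sub_cancel' hm) (Fin.natAdd m j))⟫) ∂γ ≥
      (∫ x, f (fun i => ⟪x, ξ (Fin.castLE hm i)⟫) ∂γ) *
      (∫ x, g (fun j => ⟪x, ξ (Fin.cast (Nat.add_sub_cancel' hm) (Fin.natAdd m j))⟫) ∂γ) := by
  obtain ⟨μ, hμfin, hμsym, hμF⟩ := hf
  obtain ⟨ν, hνfin, hνsym, hνF⟩ := hg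
  haveI := hμfin
  haveI := hνfin
  exact core_ineq γ hγ f g μ ν hνsym hμF hνF
    (fun i => ξ (Fin.castLE hm i))
    (fun j => ξ (Fin.cast (Nat.add_sub_cancel' hm) (Fin.natAdd m j)))
end

section
/- (Pólya) Let f: ℝ → ℝ be an even function that is convex and non-increasing on [0,∞) with lim_{t→∞} f(t) = 0 and f(0) = 1. Then f is positive definite. -/
open scoped ComplexConjugate
open MeasureTheory Set
open scoped ComplexConjugate
open MeasureTheory Set

lemma polya_overlap_vol (s a b : ℝ) :
    (volume (Ioc a (a+s) ∩ Ioc b (b+s))).toReal = max (s - |a - b|) 0 := by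
  rw [Set.Ioc_inter_Ioc, Real.volume_Ioc]
  have h : min (a+s) (b+s) - max a b = s - |a - b| := by
    rcases le_total a b with h | h
    · rw [min_eq_left (by linarith), max_eq_right h, abs_sub_comm,
        abs_of_nonneg (by linarith)]; ring
    · rw [min_eq_right (by linarith), max_eq_left h, abs_of_nonneg (by linarith)]; ring
  rw [h]
  rcases le_total (s - |a-b|) 0 with h2 | h2
  · rw [ENNReal.ofReal_eq_zero.mpr h2, max_eq_right h2, ENNReal.toReal_zero]
  · rw [ENNReal.toReal_ofReal h2, max_eq_left h2]

lemma polya_tent_psd (s : ℝ) (n : ℕ) (t : Fin n → ℝ) (c : Fin n → ℂ) :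
    ∃ r : ℝ, 0 ≤ r ∧
      ∑ i, ∑ j, ((max (s - |t i - t j|) 0 : ℝ) : ℂ) * c i * conj (c j) = (r : ℂ) := by
  set φ : Fin n → ℝ → ℂ := fun i => (Ioc (t i) (t i + s)).indicator (fun _ => (1:ℂ)) with hφ
  have hconjφ : ∀ j x, conj (φ j x) = φ j x := by
    intro j x
    simp only [hφ, Set.indicator_apply]
    split <;> simp
  have h1 : ∀ i j, (fun x => (c i * φ i x) * conj (c j * φ j x))
      = fun x => (c i * conj (c j)) •
        (Ioc (t i) (t i + s) ∩ Ioc (t j) (t j + s)).indicator (fun _ => (1:ℂ)) x := by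
    intro i j
    funext x
    have hmul : φ i x * φ j x
        = (Ioc (t i) (t i + s) ∩ Ioc (t j) (t j + s)).indicator (fun _ => (1:ℂ)) x := by
      have := Set.inter_indicator_mul (fun _ => (1:ℂ)) (fun _ => (1:ℂ))
        (s := Ioc (t i) (t i + s)) (t := Ioc (t j) (t j + s)) x
      simpa using this.symm
    simp only [map_mul, hconjφ, smul_eq_mul]
    rw [← hmul]
    ring
  have hint : ∀ i j, Integrable (fun x => (c i * φ i x) * conj (c j * φ j x)) := by
    intro i j
    rw [h1 i j]
    apply Integrable.smul (c := c i * conj (c j))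
    rw [integrable_indicator_iff ((measurableSet_Ioc.inter measurableSet_Ioc))]
    apply (integrableOn_const_iff).mpr
    right
    exact lt_of_le_of_lt (measure_mono Set.inter_subset_left) measure_Ioc_lt_top
  have key : ∀ i j, (∫ x, (c i * φ i x) * conj (c j * φ j x))
      = ((max (s - |t i - t j|) 0 : ℝ) : ℂ) * c i * conj (c j) := by
    intro i j
    rw [h1 i j, integral_smul, integral_indicator_const _
      (measurableSet_Ioc.inter measurableSet_Ioc)]
    rw [show (t i + s) = t i + s from rfl]
    rw [measureReal_def, polya_overlap_vol s (t i) (t j)]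
    simp [smul_eq_mul]
    ring
  have expand : ∀ x, ((‖∑ i, c i * φ i x‖^2 : ℝ) : ℂ)
      = ∑ i, ∑ j, (c i * φ i x) * conj (c j * φ j x) := by
    intro x
    have hs : (∑ i, c i * φ i x) * conj (∑ j, c j * φ j x)
        = ∑ i, ∑ j, (c i * φ i x) * conj (c j * φ j x) := by
      rw [map_sum, Finset.sum_mul_sum]
    rw [← hs, Complex.mul_conj]
    norm_cast
    simp [Complex.normSq_eq_norm_sq]
  refine ⟨∫ x, ‖∑ i, c i * φ i x‖^2, integral_nonneg (fun x => by positivity), ?_⟩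
  calc ∑ i, ∑ j, ((max (s - |t i - t j|) 0 : ℝ) : ℂ) * c i * conj (c j)
      = ∑ i, ∑ j, ∫ x, (c i * φ i x) * conj (c j * φ j x) := by
        simp_rw [key]
    _ = ∫ x, ∑ i, ∑ j, (c i * φ i x) * conj (c j * φ j x) := by
        rw [integral_finset_sum _ (fun i _ => integrable_finset_sum _ (fun j _ => hint i j))]
        congr 1
        funext i
        rw [integral_finset_sum _ (fun j _ => hint i j)]
    _ = ∫ x, ((‖∑ i, c i * φ i x‖^2 : ℝ) : ℂ) := by simp_rw [expand]
    _ = ((∫ x, ‖∑ i, c i * φ i x‖^2 : ℝ) : ℂ) := by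
        exact integral_ofReal



lemma polya_f_nonneg {f : ℝ → ℝ} (hmono : AntitoneOn f (Set.Ici (0:ℝ)))
    (hlim : Filter.Tendsto f Filter.atTop (nhds 0)) {x : ℝ} (hx : 0 ≤ x) : 0 ≤ f x := by
  refine le_of_tendsto hlim ?_
  filter_upwards [Filter.eventually_ge_atTop x] with y hy
  exact hmono hx (hx.trans hy) hy

lemma polya_f_flat {f : ℝ → ℝ} (hconv : ConvexOn ℝ (Set.Ici (0:ℝ)) f)
    (hmono : AntitoneOn f (Set.Ici (0:ℝ)))
    (hlim : Filter.Tendsto f Filter.atTop (nhds 0))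
    {a b : ℝ} (ha : 0 ≤ a) (hab : a < b) (hge : f a ≤ f b) : f b = 0 := by
  have hb : (0:ℝ) ≤ b := ha.trans hab.le
  refine le_antisymm ?_ (polya_f_nonneg hmono hlim hb)
  refine ge_of_tendsto hlim ?_
  filter_upwards [Filter.eventually_gt_atTop b] with x hx
  have := hconv.slope_mono_adjacent (x := a) (y := b) (z := x) ha
    (hb.trans hx.le) hab hx
  have h1 : 0 ≤ (f b - f a) / (b - a) :=
    div_nonneg (by linarith) (by linarith)
  have h2 : 0 ≤ (f x - f b) / (x - b) := h1.trans this
  have h3 : (f x - f b) / (x - b) * (x - b) = f x - f b :=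
    div_mul_cancel₀ _ (ne_of_gt (by linarith))
  nlinarith [mul_nonneg h2 (sub_pos.mpr hx).le]

lemma polya_rep {f : ℝ → ℝ} (hconv : ConvexOn ℝ (Set.Ici (0:ℝ)) f)
    (hmono : AntitoneOn f (Set.Ici (0:ℝ)))
    (hlim : Filter.Tendsto f Filter.atTop (nhds 0)) :
    ∀ m : ℕ, ∀ d : Fin (m+2) → ℝ, StrictMono d → 0 ≤ d 0 →
    ∃ (N : ℕ) (μ s : Fin N → ℝ), (∀ k, 0 ≤ μ k) ∧ (∀ k, d 1 ≤ s k) ∧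
      (∑ k, μ k = (f (d 0) - f (d 1)) / (d 1 - d 0)) ∧
      ∀ j, f (d j) = ∑ k, μ k * max (s k - d j) 0 := by
  intro m
  induction m with
  | zero =>
    intro d hd hd0
    set a := d 0 with hA
    set b := d 1 with hB
    have hab : a < b := hd (by norm_num [Fin.lt_def])
    have hb0 : 0 ≤ b := hd0.trans hab.le
    rcases le_or_gt (f a) (f b) with hge | hlt
    · -- flat case: f a = f b = 0
      have hfb : f b = 0 := polya_f_flat hconv hmono hlim hd0 hab hge
      have hfa : f a = 0 := le_antisymm (by
        have := hmono hd0 hb0 hab.le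
        linarith) (polya_f_nonneg hmono hlim hd0)
      refine ⟨0, Fin.elim0, Fin.elim0, (fun k => k.elim0), (fun k => k.elim0), ?_, ?_⟩
      · simp [hfa, hfb]
      · intro j
        have : d j = a ∨ d j = b := by
          fin_cases j <;> simp [hA, hB]
        rcases this with h | h <;> simp [h, hfa, hfb]
    · -- sloped case
      have hAB : 0 < f a - f b := by linarith
      have hδ : 0 < b - a := by linarith
      have hfb0 : 0 ≤ f b := polya_f_nonneg hmono hlim hb0
      refine ⟨1, fun _ => (f a - f b) / (b - a),
        fun _ => b + f b * (b - a) / (f a - f b), ?_, ?_, ?_, ?_⟩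
      · intro k
        positivity
      · intro k
        have : 0 ≤ f b * (b - a) / (f a - f b) := by positivity
        linarith
      · simp
      · intro j
        have hsb : (0:ℝ) ≤ b + f b * (b - a) / (f a - f b) - b := by
          have : 0 ≤ f b * (b - a) / (f a - f b) := by positivity
          linarith
        have hsa : (0:ℝ) ≤ b + f b * (b - a) / (f a - f b) - a := by linarith
        have hja : d j = a ∨ d j = b := by fin_cases j <;> simp [hA, hB]
        rcases hja with h | h <;> rw [h] <;> simp only [Fin.sum_univ_one]
        · rw [max_eq_left hsa]
          field_simp
          ring
        · rw [max_eq_left hsb]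
          field_simp
          ring
  | succ m ih =>
    intro d hd hd0
    set d' : Fin (m+2) → ℝ := fun i => d i.succ with hd'
    have hd'mono : StrictMono d' := fun i j hij => hd (Fin.succ_lt_succ_iff.mpr hij)
    have hd'0 : 0 ≤ d' 0 := hd0.trans (hd (by simp [Fin.lt_def])).le
    obtain ⟨N, μ, s, hμ, hs, hsum, hval⟩ := ih d' hd'mono hd'0
    have h01 : d 0 < d 1 := hd (by simp [Fin.lt_def])
    have h12 : d 1 < d 2 := hd (by simp [Fin.lt_def, Nat.mod_eq_of_lt (show 2 < m+1+2 by omega)])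
    have hd'0e : d' 0 = d 1 := by
      simp [hd', Fin.succ_zero_eq_one]
    have hd'1e : d' 1 = d 2 := by
      simp [hd', Fin.succ_one_eq_two]
    rw [hd'0e, hd'1e] at hsum
    have hs1 : ∀ k, d 1 ≤ s k := by
      intro k
      have := hs k
      rw [hd'1e] at this
      linarith
    set ν : ℝ := (f (d 0) - f (d 1)) / (d 1 - d 0) - ∑ k, μ k with hν
    have hν0 : 0 ≤ ν := by
      have hslope := hconv.slope_mono_adjacent (x := d 0) (y := d 1) (z := d 2)
        hd0 (hd0.trans (h01.trans h12).le) h01 h12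
      rw [hν, hsum]
      have e1 : (f (d 0) - f (d 1)) / (d 1 - d 0) = -((f (d 1) - f (d 0)) / (d 1 - d 0)) := by
        ring
      have e2 : (f (d 1) - f (d 2)) / (d 2 - d 1) = -((f (d 2) - f (d 1)) / (d 2 - d 1)) := by
        ring
      rw [e1, e2]
      linarith
    refine ⟨N+1, Fin.cons ν μ, Fin.cons (d 1) s, ?_, ?_, ?_, ?_⟩
    · intro k
      induction k using Fin.cases with
      | zero => simpa using hν0
      | succ i => simpa using hμ i
    · intro k
      induction k using Fin.cases with
      | zero => simp
      | succ i => simpa using hs1 i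
    · rw [Fin.sum_cons, hν]
      ring
    · intro j
      induction j using Fin.cases with
      | zero =>
        rw [Fin.sum_univ_succ]
        simp only [Fin.cons_zero, Fin.cons_succ]
        have hval0 := hval 0
        rw [hd'0e] at hval0
        have e : ∀ k : Fin N, μ k * max (s k - d 0) 0
            = μ k * max (s k - d 1) 0 + μ k * (d 1 - d 0) := by
          intro k
          rw [max_eq_left (by linarith [hs1 k]), max_eq_left (by linarith [hs1 k])]
          ring
        rw [max_eq_left (by linarith : (0:ℝ) ≤ d 1 - d 0)]
        rw [Finset.sum_congr rfl (fun k _ => e k), Finset.sum_add_distrib, ← hval0,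
          ← Finset.sum_mul]
        have hcancel : ((f (d 0) - f (d 1)) / (d 1 - d 0)) * (d 1 - d 0)
            = f (d 0) - f (d 1) := div_mul_cancel₀ _ (by linarith)
        have hνm : ν * (d 1 - d 0) = f (d 0) - f (d 1) - (∑ k, μ k) * (d 1 - d 0) := by
          rw [hν, sub_mul, hcancel]
        linarith
      | succ i =>
        rw [Fin.sum_univ_succ]
        simp only [Fin.cons_zero, Fin.cons_succ]
        have hvi := hval i
        rw [show d' i = d i.succ from rfl] at hvi
        have h1i : d 1 ≤ d i.succ := by
          apply hd.monotone
          simp [Fin.le_def, Nat.succ_le_succ]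
        rw [hvi, max_eq_right (by linarith), mul_zero, zero_add]


/-- Pólya's criterion: an even function, convex and non-increasing on `[0,∞)`,
tending to `0` at infinity with `f 0 = 1`, is positive definite. -/
theorem polya_criterion (f : ℝ → ℝ)
    (heven : ∀ t, f (-t) = f t)
    (hconv : ConvexOn ℝ (Set.Ici (0:ℝ)) f)
    (hmono : AntitoneOn f (Set.Ici (0:ℝ)))
    (hlim : Filter.Tendsto f Filter.atTop (nhds 0))
    (h0 : f 0 = 1) :
    ∀ (n : ℕ) (t : Fin n → ℝ) (c : Fin n → ℂ),
      0 ≤ (∑ i, ∑ j, (f (t i - t j) : ℂ) * c i * conj (c j)).re ∧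
      (∑ i, ∑ j, (f (t i - t j) : ℂ) * c i * conj (c j)).im = 0 := by
  have rep := polya_rep hconv hmono hlim
  have tent_psd := polya_tent_psd
  intro n t c
  have habs : ∀ x : ℝ, f x = f |x| := by
    intro x
    rcases abs_cases x with ⟨h, _⟩ | ⟨h, _⟩
    · rw [h]
    · rw [h, heven]
  set D : Finset ℝ :=
    (Finset.univ.image (fun p : Fin n × Fin n => |t p.1 - t p.2|)) ∪ {0, 1} with hD
  have hDpos : ∀ x ∈ D, (0:ℝ) ≤ x := by
    intro x hx
    rw [hD] at hx
    rcases Finset.mem_union.mp hx with h | h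
    · obtain ⟨p, _, rfl⟩ := Finset.mem_image.mp h
      exact abs_nonneg _
    · rcases Finset.mem_insert.mp h with h | h
      · simp [h]
      · simp at h; simp [h]
  have h0mem : (0:ℝ) ∈ D := Finset.mem_union_right _ (by simp)
  have h1mem : (1:ℝ) ∈ D := Finset.mem_union_right _ (by simp)
  have hcard2 : 2 ≤ D.card := Finset.one_lt_card.mpr ⟨0, h0mem, 1, h1mem, by norm_num⟩
  obtain ⟨m, hm⟩ : ∃ m, D.card = m + 2 := ⟨D.card - 2, by omega⟩
  set e := D.orderIsoOfFin hm with he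
  set d : Fin (m+2) → ℝ := fun j => (e j : ℝ) with hd
  have hdmono : StrictMono d := fun i j hij => Subtype.coe_lt_coe.mpr (e.strictMono hij)
  have hdmem : ∀ j, d j ∈ D := fun j => (e j).2
  have hd0 : 0 ≤ d 0 := hDpos _ (hdmem 0)
  have hsurj : ∀ x ∈ D, ∃ j, d j = x := by
    intro x hx
    exact ⟨e.symm ⟨x, hx⟩, congrArg Subtype.val (e.apply_symm_apply ⟨x, hx⟩)⟩
  obtain ⟨N, μ, s, hμ, hs, _, hval⟩ := rep m d hdmono hd0
  have hfx : ∀ x ∈ D, f x = ∑ k, μ k * max (s k - x) 0 := by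
    intro x hx
    obtain ⟨j, rfl⟩ := hsurj x hx
    exact hval j
  have hmemij : ∀ i j : Fin n, |t i - t j| ∈ D := by
    intro i j
    exact Finset.mem_union_left _ (Finset.mem_image.mpr ⟨(i, j), Finset.mem_univ _, rfl⟩)
  choose r hr0 hr using fun k : Fin N => tent_psd (s k) n t c
  have hterm : ∀ i j : Fin n, ((f (t i - t j) : ℝ) : ℂ) * c i * conj (c j)
      = ∑ k, (μ k : ℂ) * (((max (s k - |t i - t j|) 0 : ℝ) : ℂ) * c i * conj (c j)) := by
    intro i j
    have h1 : f (t i - t j) = ∑ k, μ k * max (s k - |t i - t j|) 0 := by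
      rw [habs]
      exact hfx _ (hmemij i j)
    rw [h1]
    push_cast
    rw [Finset.sum_mul, Finset.sum_mul]
    congr 1
    funext k
    ring
  have hS : (∑ i, ∑ j, (f (t i - t j) : ℂ) * c i * conj (c j))
      = ((∑ k, μ k * r k : ℝ) : ℂ) := by
    calc (∑ i, ∑ j, (f (t i - t j) : ℂ) * c i * conj (c j))
        = ∑ i, ∑ j, ∑ k, (μ k : ℂ) *
            (((max (s k - |t i - t j|) 0 : ℝ) : ℂ) * c i * conj (c j)) := by
          simp_rw [hterm]
      _ = ∑ k, ∑ i, ∑ j, (μ k : ℂ) *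
            (((max (s k - |t i - t j|) 0 : ℝ) : ℂ) * c i * conj (c j)) := by
          rw [Finset.sum_congr rfl (fun i (_ : i ∈ Finset.univ) =>
            Finset.sum_comm (s := Finset.univ) (t := Finset.univ)
              (f := fun j k => (μ k : ℂ) *
                (((max (s k - |t i - t j|) 0 : ℝ) : ℂ) * c i * conj (c j)))),
            Finset.sum_comm]
      _ = ∑ k, (μ k : ℂ) * ∑ i, ∑ j,
            (((max (s k - |t i - t j|) 0 : ℝ) : ℂ) * c i * conj (c j)) := by
          congr 1
          funext k
          rw [Finset.mul_sum]
          congr 1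
          funext i
          rw [Finset.mul_sum]
      _ = ∑ k, (μ k : ℂ) * (r k : ℂ) := by
          congr 1
          funext k
          rw [hr k]
      _ = ((∑ k, μ k * r k : ℝ) : ℂ) := by
          push_cast
          rfl
  rw [hS]
  constructor
  · rw [Complex.ofReal_re]
    exact Finset.sum_nonneg fun k _ => mul_nonneg (hμ k) (hr0 k)
  · rw [Complex.ofReal_im]
end

section
/- Let F, G ⊂ ℝ^k be bounded convex symmetric sets with nonempty interior, and for 0 ≤ λ < 1 let μ_λ be the Gaussian measure on ℝ^{2k} with covariance [[I, λI],[λI, I]]. Then lim_{λ→1⁻} μ_λ(F × G) = ν(F ∩ G), where ν is the standard Gaussian measure on ℝ^k. -/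
open MeasureTheory Real
open scoped RealInnerProductSpace

noncomputable abbrev Esp (k : ℕ) := EuclideanSpace ℝ (Fin k)

noncomputable def phi (k : ℕ) : Esp k → ℝ :=
  fun z => (Real.sqrt ((2 * π) ^ k))⁻¹ * rexp (-‖z‖ ^ 2 / 2)

lemma phi_cont (k : ℕ) : Continuous (phi k) := by
  unfold phi; fun_prop

lemma phi_nonneg (k : ℕ) (z : Esp k) : 0 ≤ phi k z := by
  unfold phi; positivity

lemma integrable_gauss (k : ℕ) {b : ℝ} (hb : 0 < b) :
    Integrable (fun v : Esp k => rexp (-b * ‖v‖ ^ 2)) := by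
  have h := (GaussianFourier.integrable_cexp_neg_mul_sq_norm_add
    (V := Esp k) (b := (b : ℂ)) (by simpa using hb) 0 0).re
  refine h.congr (Filter.Eventually.of_forall fun v => ?_)
  push_cast
  simp [← Complex.ofReal_pow, ← Complex.ofReal_neg, ← Complex.ofReal_mul, Complex.exp_ofReal_re]

lemma gauss_integral (k : ℕ) :
    ∫ v : Esp k, rexp (-‖v‖ ^ 2 / 2) = Real.sqrt ((2 * π) ^ k) := by
  have h := GaussianFourier.integral_rexp_neg_mul_sq_norm (V := Esp k)
      (b := (1 / 2 : ℝ)) (by norm_num)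
  simp only [finrank_euclideanSpace_fin] at h
  have he : (fun v : Esp k => rexp (-‖v‖ ^ 2 / 2)) = fun v : Esp k => rexp (-(1/2) * ‖v‖ ^ 2) := by
    funext v; ring_nf
  rw [he, h]
  rw [Real.sqrt_eq_rpow, ← Real.rpow_natCast (2 * π) k, ← Real.rpow_mul (by positivity)]
  rw [show π / (1/2 : ℝ) = 2 * π by ring]; ring_nf

lemma phi_integrable (k : ℕ) : Integrable (phi k) := by
  have := (integrable_gauss k (b := (1/2 : ℝ)) (by norm_num)).const_mul
    (Real.sqrt ((2 * π) ^ k))⁻¹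
  refine this.congr (Filter.Eventually.of_forall fun v => ?_)
  unfold phi; ring_nf

lemma phi_integral (k : ℕ) : ∫ z : Esp k, phi k z = 1 := by
  unfold phi
  rw [integral_const_mul, gauss_integral]
  rw [inv_mul_cancel₀ (by positivity)]

noncomputable def Jfun (k : ℕ) (V : Set (Esp k)) (lam : ℝ) (x : Esp k) : ℝ :=
  ∫ z : Esp k, ((fun z : Esp k => lam • x + Real.sqrt (1 - lam ^ 2) • z) ⁻¹' V).indicator
    (phi k) z

lemma density_eq (k : ℕ) {lam : ℝ} (h0 : 0 ≤ lam) (h1 : lam < 1) (x y : Esp k) :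
    ((2 * π) ^ k * Real.sqrt ((1 - lam ^ 2) ^ k))⁻¹ *
      rexp (-(‖x‖ ^ 2 - 2 * lam * ⟪x, y⟫ + ‖y‖ ^ 2) / (2 * (1 - lam ^ 2))) =
    phi k x *
      ((Real.sqrt ((2 * π * (1 - lam ^ 2)) ^ k))⁻¹ *
        rexp (-‖y - lam • x‖ ^ 2 / (2 * (1 - lam ^ 2)))) := by
  unfold phi
  have hs : 0 < 1 - lam ^ 2 := by nlinarith
  have hnorm : ‖y - lam • x‖ ^ 2 = ‖y‖ ^ 2 - 2 * lam * ⟪x, y⟫ + lam ^ 2 * ‖x‖ ^ 2 := by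
    rw [norm_sub_sq_real, real_inner_smul_right, real_inner_comm, norm_smul]
    simp [mul_pow, sq_abs]
    ring
  have hconst : Real.sqrt ((2 * π) ^ k) * Real.sqrt ((2 * π * (1 - lam ^ 2)) ^ k)
      = (2 * π) ^ k * Real.sqrt ((1 - lam ^ 2) ^ k) := by
    rw [mul_pow (2 * π), Real.sqrt_mul (by positivity), ← mul_assoc,
      ← Real.sqrt_mul_self (by positivity : (0:ℝ) ≤ (2 * π) ^ k), ← Real.sqrt_mul (by positivity)]
    rw [Real.sqrt_mul_self (by positivity)]
  symm
  calc ((Real.sqrt ((2 * π) ^ k))⁻¹ * rexp (-‖x‖ ^ 2 / 2)) *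
      ((Real.sqrt ((2 * π * (1 - lam ^ 2)) ^ k))⁻¹ *
        rexp (-‖y - lam • x‖ ^ 2 / (2 * (1 - lam ^ 2))))
      = (Real.sqrt ((2 * π) ^ k) * Real.sqrt ((2 * π * (1 - lam ^ 2)) ^ k))⁻¹ *
        rexp (-‖x‖ ^ 2 / 2 + -‖y - lam • x‖ ^ 2 / (2 * (1 - lam ^ 2))) := by
        rw [mul_inv, Real.exp_add]; ring
    _ = _ := by
        rw [hconst]; congr 1; rw [hnorm]; field_simp; ring

lemma inner_cov (k : ℕ) {V : Set (Esp k)} (hV : IsOpen V) {lam : ℝ}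
    (h0 : 0 ≤ lam) (h1 : lam < 1) (x : Esp k) :
    ∫ y in V, (Real.sqrt ((2 * π * (1 - lam ^ 2)) ^ k))⁻¹ *
        rexp (-‖y - lam • x‖ ^ 2 / (2 * (1 - lam ^ 2)))
      = Jfun k V lam x := by
  unfold Jfun phi
  have hs : 0 < 1 - lam ^ 2 := by nlinarith
  set σ := Real.sqrt (1 - lam ^ 2) with hσdef
  have hσ : 0 < σ := Real.sqrt_pos.2 hs
  have hσ2 : σ ^ 2 = 1 - lam ^ 2 := Real.sq_sqrt hs.le
  set c : ℝ := (Real.sqrt ((2 * π * (1 - lam ^ 2)) ^ k))⁻¹ with hc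
  set f : Esp k → ℝ := fun y => c * rexp (-‖y - lam • x‖ ^ 2 / (2 * (1 - lam ^ 2))) with hf
  rw [← integral_indicator hV.measurableSet]
  rw [← integral_add_right_eq_self (fun y => V.indicator f y) (lam • x)]
  have hsc := Measure.integral_comp_smul (volume : Measure (Esp k))
      (fun w => V.indicator f (w + lam • x)) σ
  simp only [finrank_euclideanSpace_fin] at hsc
  have hne : ((σ : ℝ) ^ k) ≠ 0 := pow_ne_zero _ hσ.ne'
  have habs : |((σ : ℝ) ^ k)⁻¹| = (σ ^ k)⁻¹ := abs_of_pos (by positivity)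
  rw [habs] at hsc
  have key : ∫ w, V.indicator f (w + lam • x) = (σ ^ k) • ∫ z, V.indicator f (σ • z + lam • x) := by
    rw [hsc, smul_smul, mul_inv_cancel₀ hne, one_smul]
  rw [key, ← integral_smul]
  congr 1
  funext z
  by_cases hz : lam • x + σ • z ∈ V
  · have hz' : σ • z + lam • x ∈ V := by rwa [add_comm]
    rw [Set.indicator_of_mem hz', Set.indicator_of_mem (by exact hz)]
    have hnorm : ‖σ • z + lam • x - lam • x‖ ^ 2 = σ ^ 2 * ‖z‖ ^ 2 := by
      rw [add_sub_cancel_right, norm_smul]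
      simp [mul_pow, sq_abs]
    have hcc : c = (Real.sqrt ((2 * π) ^ k) * σ ^ k)⁻¹ := by
      rw [hc]
      congr 1
      rw [mul_pow (2 * π), Real.sqrt_mul (by positivity)]
      congr 1
      rw [← hσ2, ← pow_mul, mul_comm 2 k, pow_mul, Real.sqrt_sq (by positivity)]
    rw [hf]
    simp only [hnorm, smul_eq_mul, hcc]
    rw [show -(σ ^ 2 * ‖z‖ ^ 2) / (2 * (1 - lam ^ 2)) = -‖z‖ ^ 2 / 2 by
      rw [← hσ2]; field_simp]
    rw [mul_inv]
    field_simp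
  · have hz' : σ • z + lam • x ∉ V := by rwa [add_comm]
    rw [Set.indicator_of_notMem hz', Set.indicator_of_notMem (by exact hz), smul_zero]

lemma affmap_cont (k : ℕ) (lam σ : ℝ) (x : Esp k) :
    Continuous (fun z : Esp k => lam • x + σ • z) :=
  continuous_const.add (continuous_id.const_smul σ)

lemma Jfun_nonneg (k : ℕ) (V : Set (Esp k)) (lam : ℝ) (x : Esp k) : 0 ≤ Jfun k V lam x :=
  integral_nonneg fun z => Set.indicator_nonneg (fun z _ => phi_nonneg k z) z

lemma Jfun_le_one (k : ℕ) {V : Set (Esp k)} (hV : IsOpen V) (lam : ℝ) (x : Esp k) :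
    Jfun k V lam x ≤ 1 := by
  rw [← phi_integral k]
  have hS : MeasurableSet ((fun z : Esp k => lam • x + Real.sqrt (1 - lam ^ 2) • z) ⁻¹' V) :=
    ((affmap_cont k lam _ x).isOpen_preimage V hV).measurableSet
  exact integral_mono ((phi_integrable k).indicator hS) (phi_integrable k)
    (Set.indicator_le_self' fun z _ => phi_nonneg k z)

lemma tendsto_affmap (k : ℕ) (x z : Esp k) :
    Filter.Tendsto (fun lam : ℝ => lam • x + Real.sqrt (1 - lam ^ 2) • z)
      (nhdsWithin 1 (Set.Ico (0:ℝ) 1)) (nhds x) := by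
  have hcont : Continuous (fun lam : ℝ => lam • x + Real.sqrt (1 - lam ^ 2) • z) := by
    fun_prop
  have h := (hcont.tendsto 1).mono_left
    (nhdsWithin_le_nhds (s := Set.Ico (0:ℝ) 1))
  simpa using h

lemma Jfun_tendsto_one (k : ℕ) {V : Set (Esp k)} (hV : IsOpen V) {x : Esp k} (hx : x ∈ V) :
    Filter.Tendsto (fun lam => Jfun k V lam x) (nhdsWithin 1 (Set.Ico (0:ℝ) 1)) (nhds 1) := by
  have main : Filter.Tendsto (fun lam => Jfun k V lam x) (nhdsWithin 1 (Set.Ico (0:ℝ) 1))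
      (nhds (∫ z : Esp k, phi k z)) := by
    apply tendsto_integral_filter_of_dominated_convergence (phi k)
    · refine Filter.Eventually.of_forall fun lam => ?_
      have hS : MeasurableSet ((fun z : Esp k => lam • x + Real.sqrt (1 - lam ^ 2) • z) ⁻¹' V) :=
        ((affmap_cont k lam _ x).isOpen_preimage V hV).measurableSet
      exact ((phi_cont k).aestronglyMeasurable).indicator hS
    · refine Filter.Eventually.of_forall fun lam => Filter.Eventually.of_forall fun z => ?_
      rw [Real.norm_eq_abs, abs_of_nonneg (Set.indicator_nonneg (fun z _ => phi_nonneg k z) z)]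
      exact Set.indicator_le_self' (fun z _ => phi_nonneg k z) z
    · exact phi_integrable k
    · refine Filter.Eventually.of_forall fun z => ?_
      have hev : ∀ᶠ lam in nhdsWithin 1 (Set.Ico (0:ℝ) 1),
          lam • x + Real.sqrt (1 - lam ^ 2) • z ∈ V := tendsto_affmap k x z (hV.mem_nhds hx)
      refine Filter.Tendsto.congr' ?_ tendsto_const_nhds
      filter_upwards [hev] with lam h
      exact (Set.indicator_of_mem (show z ∈ (fun z : Esp k =>
        lam • x + Real.sqrt (1 - lam ^ 2) • z) ⁻¹' V from h) (phi k)).symm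
  rw [phi_integral k] at main
  exact main

lemma Jfun_tendsto_zero (k : ℕ) {V : Set (Esp k)} (hV : IsOpen V) {x : Esp k}
    (hx : x ∉ closure V) :
    Filter.Tendsto (fun lam => Jfun k V lam x) (nhdsWithin 1 (Set.Ico (0:ℝ) 1)) (nhds 0) := by
  have main : Filter.Tendsto (fun lam => Jfun k V lam x) (nhdsWithin 1 (Set.Ico (0:ℝ) 1))
      (nhds (∫ _z : Esp k, (0:ℝ))) := by
    apply tendsto_integral_filter_of_dominated_convergence (phi k)
    · refine Filter.Eventually.of_forall fun lam => ?_
      have hS : MeasurableSet ((fun z : Esp k => lam • x + Real.sqrt (1 - lam ^ 2) • z) ⁻¹' V) :=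
        ((affmap_cont k lam _ x).isOpen_preimage V hV).measurableSet
      exact ((phi_cont k).aestronglyMeasurable).indicator hS
    · refine Filter.Eventually.of_forall fun lam => Filter.Eventually.of_forall fun z => ?_
      rw [Real.norm_eq_abs, abs_of_nonneg (Set.indicator_nonneg (fun z _ => phi_nonneg k z) z)]
      exact Set.indicator_le_self' (fun z _ => phi_nonneg k z) z
    · exact phi_integrable k
    · refine Filter.Eventually.of_forall fun z => ?_
      have hev : ∀ᶠ lam in nhdsWithin 1 (Set.Ico (0:ℝ) 1),
          lam • x + Real.sqrt (1 - lam ^ 2) • z ∈ (closure V)ᶜ :=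
        tendsto_affmap k x z ((isOpen_compl_iff.2 isClosed_closure).mem_nhds hx)
      refine Filter.Tendsto.congr' ?_ tendsto_const_nhds
      filter_upwards [hev] with lam h
      exact (Set.indicator_of_notMem (show z ∉ (fun z : Esp k =>
        lam • x + Real.sqrt (1 - lam ^ 2) • z) ⁻¹' V from
          fun hm => h (subset_closure hm)) (phi k)).symm
  simpa using main

lemma Jfun_stronglyMeasurable (k : ℕ) {V : Set (Esp k)} (hV : IsOpen V) (lam : ℝ) :
    StronglyMeasurable (fun x => Jfun k V lam x) := by
  have hmap : Continuous (fun p : Esp k × Esp k =>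
      lam • p.1 + Real.sqrt (1 - lam ^ 2) • p.2) :=
    by fun_prop
  have hF : StronglyMeasurable (fun p : Esp k × Esp k =>
      ((fun p : Esp k × Esp k => lam • p.1 + Real.sqrt (1 - lam ^ 2) • p.2) ⁻¹' V).indicator
        (fun p => phi k p.2) p) :=
    (((phi_cont k).comp continuous_snd).stronglyMeasurable).indicator
      ((hmap.isOpen_preimage V hV).measurableSet)
  have hsm := StronglyMeasurable.integral_prod_right' (ν := (volume : Measure (Esp k))) hF
  have hfe : (fun x => Jfun k V lam x) = fun x =>
      ∫ z : Esp k, ((fun p : Esp k × Esp k =>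
        lam • p.1 + Real.sqrt (1 - lam ^ 2) • p.2) ⁻¹' V).indicator
        (fun p => phi k p.2) (x, z) := by
    funext x
    unfold Jfun
    refine integral_congr_ae (Filter.Eventually.of_forall fun z => ?_)
    by_cases h : lam • x + Real.sqrt (1 - lam ^ 2) • z ∈ V
    · rw [Set.indicator_of_mem
        (show z ∈ (fun z : Esp k => lam • x + Real.sqrt (1 - lam ^ 2) • z) ⁻¹' V from h) (phi k)]
      exact (Set.indicator_of_mem (show (x, z) ∈ (fun p : Esp k × Esp k =>
        lam • p.1 + Real.sqrt (1 - lam ^ 2) • p.2) ⁻¹' V from h)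
        (fun p : Esp k × Esp k => phi k p.2)).symm
    · rw [Set.indicator_of_notMem
        (show z ∉ (fun z : Esp k => lam • x + Real.sqrt (1 - lam ^ 2) • z) ⁻¹' V from h) (phi k)]
      exact (Set.indicator_of_notMem (show (x, z) ∉ (fun p : Esp k × Esp k =>
        lam • p.1 + Real.sqrt (1 - lam ^ 2) • p.2) ⁻¹' V from h)
        (fun p : Esp k × Esp k => phi k p.2)).symm
  rw [hfe]
  exact hsm

/-- As `λ → 1⁻`, the Gaussian measure with covariance `[[I, λI],[λI, I]]` of
`F × G` tends to the standard Gaussian measure of `F ∩ G`. -/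
theorem gaussian_lambda_limit (k : ℕ)
    (F G : Set (EuclideanSpace ℝ (Fin k)))
    (hFconv : Convex ℝ F) (hFsymm : F = -F) (hFbd : Bornology.IsBounded F)
    (hFint : (interior F).Nonempty)
    (hGconv : Convex ℝ G) (hGsymm : G = -G) (hGbd : Bornology.IsBounded G)
    (hGint : (interior G).Nonempty) :
    Filter.Tendsto
      (fun lam : ℝ => ∫ x in F, ∫ y in G,
        ((2 * π) ^ k * Real.sqrt ((1 - lam ^ 2) ^ k))⁻¹ *
          Real.exp (-(‖x‖ ^ 2 - 2 * lam * ⟪x, y⟫ + ‖y‖ ^ 2) / (2 * (1 - lam ^ 2))))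
      (nhdsWithin 1 (Set.Ico (0:ℝ) 1))
      (nhds (∫ x in F ∩ G, (Real.sqrt ((2 * π) ^ k))⁻¹ * Real.exp (-‖x‖ ^ 2 / 2))) := by
  set U := interior F with hUdef
  set V := interior G with hVdef
  have hUo : IsOpen U := isOpen_interior
  have hVo : IsOpen V := isOpen_interior
  have hFU : F =ᵐ[(volume : Measure (Esp k))] U := by
    rw [MeasureTheory.ae_eq_set]
    constructor
    · have hsub : F \ U ⊆ frontier F := fun x hx => ⟨subset_closure hx.1, hx.2⟩
      exact measure_mono_null hsub (hFconv.addHaar_frontier volume)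
    · rw [Set.diff_eq_empty.2 interior_subset]; simp
  have hGV : G =ᵐ[(volume : Measure (Esp k))] V := by
    rw [MeasureTheory.ae_eq_set]
    constructor
    · have hsub : G \ V ⊆ frontier G := fun x hx => ⟨subset_closure hx.1, hx.2⟩
      exact measure_mono_null hsub (hGconv.addHaar_frontier volume)
    · rw [Set.diff_eq_empty.2 interior_subset]; simp
  -- Rewrite the target integral
  have hRHS : (∫ x in F ∩ G, (Real.sqrt ((2 * π) ^ k))⁻¹ * Real.exp (-‖x‖ ^ 2 / 2))
      = ∫ x in U, V.indicator (phi k) x := by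
    rw [setIntegral_indicator hVo.measurableSet]
    rw [setIntegral_congr_set (hFU.inter hGV)]
    rfl
  rw [hRHS]
  have main : Filter.Tendsto (fun lam : ℝ => ∫ x in U, phi k x * Jfun k V lam x)
      (nhdsWithin 1 (Set.Ico (0:ℝ) 1)) (nhds (∫ x in U, V.indicator (phi k) x)) := by
    apply tendsto_integral_filter_of_dominated_convergence (phi k)
    · refine Filter.Eventually.of_forall fun lam => ?_
      exact (((phi_cont k).stronglyMeasurable.mul
        (Jfun_stronglyMeasurable k hVo lam)).aestronglyMeasurable).restrict
    · refine Filter.Eventually.of_forall fun lam => ?_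
      refine Filter.Eventually.of_forall fun x => ?_
      rw [Real.norm_eq_abs,
        abs_of_nonneg (mul_nonneg (phi_nonneg k x) (Jfun_nonneg k V lam x))]
      calc phi k x * Jfun k V lam x ≤ phi k x * 1 :=
            mul_le_mul_of_nonneg_left (Jfun_le_one k hVo lam x) (phi_nonneg k x)
        _ = phi k x := mul_one _
    · exact (phi_integrable k).restrict
    · have hfr : (volume : Measure (Esp k)) (frontier V) = 0 :=
        (hGconv.interior).addHaar_frontier volume
      have hae : ∀ᵐ x ∂(volume : Measure (Esp k)), x ∉ frontier V :=
        measure_eq_zero_iff_ae_notMem.mp hfr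
      refine ae_restrict_of_ae (hae.mono fun x hx => ?_)
      by_cases hxV : x ∈ V
      · rw [Set.indicator_of_mem hxV]
        have h := (Jfun_tendsto_one k hVo hxV).const_mul (phi k x)
        simpa using h
      · have hxc : x ∉ closure V := by
          intro hc
          exact hx ⟨hc, by rwa [hVo.interior_eq]⟩
        rw [Set.indicator_of_notMem hxV]
        have h := (Jfun_tendsto_zero k hVo hxc).const_mul (phi k x)
        simpa using h
  refine Filter.Tendsto.congr' ?_ main
  filter_upwards [self_mem_nhdsWithin] with lam hlam
  obtain ⟨h0, h1⟩ := hlam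
  have hinner : ∀ x : Esp k,
      phi k x * Jfun k V lam x = ∫ y in G,
        ((2 * π) ^ k * Real.sqrt ((1 - lam ^ 2) ^ k))⁻¹ *
          Real.exp (-(‖x‖ ^ 2 - 2 * lam * ⟪x, y⟫ + ‖y‖ ^ 2) / (2 * (1 - lam ^ 2))) := by
    intro x
    rw [setIntegral_congr_set hGV]
    rw [show (∫ y in V, ((2 * π) ^ k * Real.sqrt ((1 - lam ^ 2) ^ k))⁻¹ *
          Real.exp (-(‖x‖ ^ 2 - 2 * lam * ⟪x, y⟫ + ‖y‖ ^ 2) / (2 * (1 - lam ^ 2))))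
        = ∫ y in V, phi k x * ((Real.sqrt ((2 * π * (1 - lam ^ 2)) ^ k))⁻¹ *
            rexp (-‖y - lam • x‖ ^ 2 / (2 * (1 - lam ^ 2)))) from
      integral_congr_ae (Filter.Eventually.of_forall fun y => density_eq k h0 h1 x y)]
    rw [integral_const_mul, inner_cov k hVo h0 h1 x]
  calc (∫ x in U, phi k x * Jfun k V lam x)
      = ∫ x in U, ∫ y in G,
          ((2 * π) ^ k * Real.sqrt ((1 - lam ^ 2) ^ k))⁻¹ *
            Real.exp (-(‖x‖ ^ 2 - 2 * lam * ⟪x, y⟫ + ‖y‖ ^ 2) / (2 * (1 - lam ^ 2))) :=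
        integral_congr_ae (Filter.Eventually.of_forall fun x => hinner x)
    _ = _ := (setIntegral_congr_set hFU).symm
end

section
/- Let u ∈ ℝ^k not lie in the topological boundary of the convex set F nor of the convex set G. Then lim_{λ→1⁻} (√π (1-λ))^{-k} ∫_{(F-u)∩(u-G)} exp(-‖v‖²/(1-λ)) dv = χ_{F∩G}(u). -/
open MeasureTheory Real Filter Topology

private lemma gauss_integrable (k : ℕ) {t : ℝ} (ht : 0 < t) :
    Integrable (fun v : EuclideanSpace ℝ (Fin k) => Real.exp (-‖v‖ ^ 2 / t)) := by
  have h := (GaussianFourier.integrable_cexp_neg_mul_sq_norm_add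
    (V := EuclideanSpace ℝ (Fin k)) (b := (1/t : ℂ)) (by simp [ht]) 0 0).norm
  refine h.congr (Filter.Eventually.of_forall fun v => ?_)
  simp only [inner_zero_left, Complex.ofReal_zero, mul_zero, add_zero, zero_mul]
  have hz : (-(1/(t:ℂ)) * (‖v‖:ℂ) ^ 2) = ((-‖v‖ ^ 2 / t : ℝ) : ℂ) := by
    push_cast; ring
  rw [hz, Complex.norm_exp_ofReal]

private lemma gauss_total (k : ℕ) {t : ℝ} (ht : 0 < t) :
    ∫ v : EuclideanSpace ℝ (Fin k), Real.exp (-‖v‖ ^ 2 / t) = Real.sqrt (π * t) ^ k := by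
  have h : ∀ v : EuclideanSpace ℝ (Fin k),
      Real.exp (-‖v‖ ^ 2 / t) = Real.exp (-(1/t) * ‖v‖ ^ 2) := by
    intro v; congr 1; ring
  simp_rw [h]
  rw [GaussianFourier.integral_rexp_neg_mul_sq_norm (by positivity : (0:ℝ) < 1/t)]
  rw [finrank_euclideanSpace_fin, div_div_eq_mul_div, div_one]
  rw [Real.sqrt_eq_rpow, ← Real.rpow_natCast ((π*t) ^ (1/2:ℝ)) k,
    ← Real.rpow_mul (by positivity)]
  congr 1
  ring

private lemma tendsto_gauss_zero (k : ℕ) (S : Set (EuclideanSpace ℝ (Fin k))) {r : ℝ}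
    (hr : 0 < r) (hS : S ⊆ {v | r ≤ ‖v‖}) :
    Tendsto (fun t : ℝ => (Real.sqrt (π * t) ^ k)⁻¹ * ∫ v in S, Real.exp (-‖v‖ ^ 2 / t))
      (𝓝[>] (0:ℝ)) (𝓝 0) := by
  have hmeas : MeasurableSet {v : EuclideanSpace ℝ (Fin k) | r ≤ ‖v‖} :=
    (isClosed_le continuous_const continuous_norm).measurableSet
  -- upper bound function
  have hg : Tendsto (fun t : ℝ => Real.sqrt 2 ^ k * Real.exp (-r ^ 2 / (2 * t)))
      (𝓝[>] (0:ℝ)) (𝓝 0) := by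
    have h1 : Tendsto (fun t : ℝ => -r ^ 2 / (2 * t)) (𝓝[>] (0:ℝ)) atBot := by
      have h2 : Tendsto (fun t : ℝ => (2 * t)⁻¹) (𝓝[>] (0:ℝ)) atTop := by
        apply tendsto_inv_nhdsGT_zero.comp
        apply tendsto_nhdsWithin_of_tendsto_nhds_of_eventually_within
        · simpa using ((continuous_mul_left (2:ℝ)).tendsto (0:ℝ)).mono_left
            nhdsWithin_le_nhds
        · filter_upwards [self_mem_nhdsWithin] with x hx
          simp only [Set.mem_Ioi] at hx ⊢
          positivity
      have : ∀ t : ℝ, -r ^ 2 / (2 * t) = (-r ^ 2) * (2 * t)⁻¹ := fun t => by ring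
      simp_rw [this]
      exact Tendsto.const_mul_atTop_of_neg (neg_lt_zero.2 (by positivity)) h2
    simpa [mul_zero] using
      ((Real.tendsto_exp_atBot.comp h1).const_mul (Real.sqrt 2 ^ k))
  apply tendsto_of_tendsto_of_tendsto_of_le_of_le' tendsto_const_nhds hg
  · filter_upwards [self_mem_nhdsWithin] with t ht
    have : 0 ≤ ∫ v in S, Real.exp (-‖v‖ ^ 2 / t) :=
      integral_nonneg fun v => (Real.exp_nonneg _)
    positivity
  · filter_upwards [self_mem_nhdsWithin] with t ht
    simp only [Set.mem_Ioi] at ht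
    have hπt : 0 < π * t := by positivity
    -- chain of inequalities for the integral
    have hint2t := gauss_integrable k (by positivity : (0:ℝ) < 2 * t)
    have step1 : ∫ v in S, Real.exp (-‖v‖ ^ 2 / t)
        ≤ ∫ v in {v : EuclideanSpace ℝ (Fin k) | r ≤ ‖v‖}, Real.exp (-‖v‖ ^ 2 / t) := by
      apply setIntegral_mono_set ((gauss_integrable k ht).integrableOn)
      · exact Filter.Eventually.of_forall fun v => Real.exp_nonneg _
      · exact Filter.Eventually.of_forall hS
    have step2 : ∫ v in {v : EuclideanSpace ℝ (Fin k) | r ≤ ‖v‖}, Real.exp (-‖v‖ ^ 2 / t)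
        ≤ ∫ v in {v : EuclideanSpace ℝ (Fin k) | r ≤ ‖v‖},
            Real.exp (-r ^ 2 / (2 * t)) * Real.exp (-‖v‖ ^ 2 / (2 * t)) := by
      apply setIntegral_mono_on ((gauss_integrable k ht).integrableOn)
        ((hint2t.integrableOn).const_mul _) hmeas
      intro v hv
      have hv' : r ≤ ‖v‖ := hv
      rw [← Real.exp_add]
      apply Real.exp_le_exp.2
      have h1 : r ^ 2 ≤ ‖v‖ ^ 2 := by
        apply pow_le_pow_left₀ hr.le hv'
      rw [← add_div, div_le_div_iff₀ ht (by positivity)]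
      nlinarith [mul_nonneg (sub_nonneg.2 h1) ht.le]
    have step3 : ∫ v in {v : EuclideanSpace ℝ (Fin k) | r ≤ ‖v‖},
            Real.exp (-r ^ 2 / (2 * t)) * Real.exp (-‖v‖ ^ 2 / (2 * t))
        ≤ Real.exp (-r ^ 2 / (2 * t)) * Real.sqrt (π * (2 * t)) ^ k := by
      rw [MeasureTheory.integral_const_mul, ← gauss_total k (by positivity : (0:ℝ) < 2 * t)]
      apply mul_le_mul_of_nonneg_left _ (Real.exp_nonneg _)
      exact setIntegral_le_integral hint2t
        (Filter.Eventually.of_forall fun v => Real.exp_nonneg _)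
    have hsq : Real.sqrt (π * (2 * t)) = Real.sqrt 2 * Real.sqrt (π * t) := by
      rw [← Real.sqrt_mul (by norm_num : (0:ℝ) ≤ 2)]
      congr 1; ring
    have hne : Real.sqrt (π * t) ^ k ≠ 0 := by positivity
    calc (Real.sqrt (π * t) ^ k)⁻¹ * ∫ v in S, Real.exp (-‖v‖ ^ 2 / t)
        ≤ (Real.sqrt (π * t) ^ k)⁻¹ *
            (Real.exp (-r ^ 2 / (2 * t)) * Real.sqrt (π * (2 * t)) ^ k) := by
          apply mul_le_mul_of_nonneg_left ((step1.trans step2).trans step3)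
          positivity
      _ = Real.sqrt 2 ^ k * Real.exp (-r ^ 2 / (2 * t)) := by
          rw [hsq, mul_pow]
          field_simp

private lemma tendsto_gauss_one (k : ℕ) (S : Set (EuclideanSpace ℝ (Fin k)))
    (hSm : NullMeasurableSet S volume) {r : ℝ} (hr : 0 < r)
    (hS : Metric.ball (0 : EuclideanSpace ℝ (Fin k)) r ⊆ S) :
    Tendsto (fun t : ℝ => (Real.sqrt (π * t) ^ k)⁻¹ * ∫ v in S, Real.exp (-‖v‖ ^ 2 / t))
      (𝓝[>] (0:ℝ)) (𝓝 1) := by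
  have hSc : Sᶜ ⊆ {v : EuclideanSpace ℝ (Fin k) | r ≤ ‖v‖} := by
    intro v hv
    by_contra h
    simp only [Set.mem_setOf_eq, not_le] at h
    exact hv (hS (by simpa [Metric.mem_ball, dist_eq_norm] using h))
  have h0 := tendsto_gauss_zero k Sᶜ hr hSc
  have heq : ∀ᶠ t in 𝓝[>] (0:ℝ),
      1 - (Real.sqrt (π * t) ^ k)⁻¹ * ∫ v in Sᶜ, Real.exp (-‖v‖ ^ 2 / t)
      = (Real.sqrt (π * t) ^ k)⁻¹ * ∫ v in S, Real.exp (-‖v‖ ^ 2 / t) := by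
    filter_upwards [self_mem_nhdsWithin] with t ht
    simp only [Set.mem_Ioi] at ht
    have htotal := gauss_total k ht
    have hsplit : (∫ v in S, Real.exp (-‖v‖ ^ 2 / t))
        + ∫ v in Sᶜ, Real.exp (-‖v‖ ^ 2 / t) = Real.sqrt (π * t) ^ k := by
      rw [← htotal]
      exact integral_add_compl₀ hSm (gauss_integrable k ht)
    have hne : Real.sqrt (π * t) ^ k ≠ 0 := by positivity
    have hB : (∫ v in S, Real.exp (-‖v‖ ^ 2 / t))
        = Real.sqrt (π * t) ^ k - ∫ v in Sᶜ, Real.exp (-‖v‖ ^ 2 / t) := by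
      linarith [hsplit]
    rw [hB, mul_sub, inv_mul_cancel₀ hne]
  have := (tendsto_const_nhds (x := (1:ℝ)) (f := 𝓝[>] (0:ℝ))).sub h0
  rw [sub_zero] at this
  exact this.congr' heq

/-- For `u` not on the boundary of the convex sets `F` and `G`,
`(π(1-λ))^{-k/2} ∫_{(F-u)∩(u-G)} exp(-‖v‖²/(1-λ)) dv → χ_{F∩G}(u)` as `λ → 1⁻`. -/
theorem gaussian_concentration_indicator (k : ℕ)
    (F G : Set (EuclideanSpace ℝ (Fin k)))
    (hFconv : Convex ℝ F) (hGconv : Convex ℝ G)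
    (u : EuclideanSpace ℝ (Fin k))
    (huF : u ∉ frontier F) (huG : u ∉ frontier G) :
    Filter.Tendsto
      (fun lam : ℝ =>
        (Real.sqrt (π * (1 - lam)) ^ k)⁻¹ *
          ∫ v in {v | u + v ∈ F ∧ u - v ∈ G}, Real.exp (-‖v‖ ^ 2 / (1 - lam)))
      (nhdsWithin 1 (Set.Iio (1:ℝ)))
      (nhds (Set.indicator (F ∩ G) (fun _ => (1:ℝ)) u)) := by
  set S : Set (EuclideanSpace ℝ (Fin k)) := {v | u + v ∈ F ∧ u - v ∈ G} with hSdef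
  -- the map lam ↦ 1 - lam
  have hmap : Tendsto (fun lam : ℝ => 1 - lam) (𝓝[<] (1:ℝ)) (𝓝[>] (0:ℝ)) := by
    apply tendsto_nhdsWithin_of_tendsto_nhds_of_eventually_within
    · have hc : Tendsto (fun lam : ℝ => 1 - lam) (𝓝 (1:ℝ)) (𝓝 0) := by
        have hcont : Continuous (fun lam : ℝ => 1 - lam) := by continuity
        simpa using hcont.tendsto (1:ℝ)
      exact hc.mono_left nhdsWithin_le_nhds
    · filter_upwards [self_mem_nhdsWithin] with x hx
      simp only [Set.mem_Iio] at hx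
      simpa using by linarith
  have hF : u ∈ interior F ∨ u ∉ closure F := by
    by_cases h : u ∈ closure F
    · left; by_contra h'; exact huF ⟨h, h'⟩
    · right; exact h
  have hG : u ∈ interior G ∨ u ∉ closure G := by
    by_cases h : u ∈ closure G
    · left; by_contra h'; exact huG ⟨h, h'⟩
    · right; exact h
  -- helper for the zero case
  have zero_case : ∀ (r : ℝ), 0 < r → S ⊆ {v | r ≤ ‖v‖} → u ∉ F ∩ G →
      Filter.Tendsto
        (fun lam : ℝ =>
          (Real.sqrt (π * (1 - lam)) ^ k)⁻¹ *
            ∫ v in S, Real.exp (-‖v‖ ^ 2 / (1 - lam)))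
        (𝓝[<] (1:ℝ)) (𝓝 (Set.indicator (F ∩ G) (fun _ => (1:ℝ)) u)) := by
    intro r hr hsub hu
    rw [Set.indicator_of_notMem hu]
    exact (tendsto_gauss_zero k S hr hsub).comp hmap
  rcases hF with hF | hF
  · rcases hG with hG | hG
    · -- both interior : limit 1
      obtain ⟨rF, hrF, hballF⟩ := Metric.isOpen_iff.1 isOpen_interior u hF
      obtain ⟨rG, hrG, hballG⟩ := Metric.isOpen_iff.1 isOpen_interior u hG
      set r := min rF rG with hrdef
      have hr : 0 < r := lt_min hrF hrG
      have hball : Metric.ball (0 : EuclideanSpace ℝ (Fin k)) r ⊆ S := by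
        intro v hv
        simp only [Metric.mem_ball, dist_zero_right] at hv
        constructor
        · apply interior_subset (hballF _)
          simp only [Metric.mem_ball, dist_eq_norm]
          simpa using lt_of_lt_of_le hv (min_le_left _ _)
        · apply interior_subset (hballG _)
          simp only [Metric.mem_ball, dist_eq_norm]
          have : u - v - u = -v := by abel
          rw [this, norm_neg]
          exact lt_of_lt_of_le hv (min_le_right _ _)
      have hSconv : Convex ℝ S := by
        intro x hx y hy a b ha hb hab
        constructor
        · have h1 : u + (a • x + b • y) = a • (u + x) + b • (u + y) := by
            have : a • (u + x) + b • (u + y) = (a + b) • u + (a • x + b • y) := by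
              module
            rw [this, hab, one_smul]
          rw [h1]
          exact hFconv hx.1 hy.1 ha hb hab
        · have h2 : u - (a • x + b • y) = a • (u - x) + b • (u - y) := by
            have : a • (u - x) + b • (u - y) = (a + b) • u - (a • x + b • y) := by
              module
            rw [this, hab, one_smul]
          rw [h2]
          exact hGconv hx.2 hy.2 ha hb hab
      have hu : u ∈ F ∩ G := ⟨interior_subset hF, interior_subset hG⟩
      rw [Set.indicator_of_mem hu]
      exact (tendsto_gauss_one k S (hSconv.nullMeasurableSet volume) hr hball).comp hmap
    · -- u ∉ closure G : limit 0
      obtain ⟨r, hr, hball⟩ := Metric.isOpen_iff.1 isClosed_closure.isOpen_compl u hG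
      apply zero_case r hr
      · intro v hv
        have h1 : u - v ∈ closure G := subset_closure hv.2
        have h2 : u - v ∉ Metric.ball u r := fun h => hball h h1
        simp only [Metric.mem_ball, dist_eq_norm, not_lt] at h2
        have h3 : u - v - u = -v := by abel
        rw [h3, norm_neg] at h2
        exact h2
      · intro h
        exact hG (subset_closure h.2)
  · -- u ∉ closure F : limit 0
    obtain ⟨r, hr, hball⟩ := Metric.isOpen_iff.1 isClosed_closure.isOpen_compl u hF
    apply zero_case r hr
    · intro v hv
      have h1 : u + v ∈ closure F := subset_closure hv.1
      have h2 : u + v ∉ Metric.ball u r := fun h => hball h h1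
      simp only [Metric.mem_ball, dist_eq_norm, not_lt] at h2
      simpa using h2
    · intro h
      exact hF (subset_closure h.1)
end
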